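/- arXiv:2201.02940 — 7 statements merged into one kernel-verified Lean document; each statement's English description precedes it below -/
import Mathlib

section
/- Let T > 0, let n, m be positive integers, and define μ₀(t) = (T/(T−t))^{n+m} for t ∈ [0, T). Let k > 0, let d : [0, T) → ℝ be a bounded function with |d(t)| ≤ d̄ for all t, and let V : [0, T) → [0, +∞) be continuously differentiable with V′(t) ≤ −k·μ₀(t)·V(t) + μ₀(t)·d(t)² for all t ∈ [0, T). Then V is bounded on [0, T); in fact V(t) ≤ max(V(0), d̄²/k) for all t ∈ [0, T). -/
open Set

/-- Boundedness part of Lemma 2: if `V ≥ 0` is continuously differentiable on `[0, T)` with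
`V′(t) ≤ −k·μ₀(t)·V(t) + μ₀(t)·d(t)²`, where `μ₀(t) = (T/(T−t))^(n+m)` and `|d| ≤ d̄`,
then `V(t) ≤ max(V(0), d̄²/k)` on `[0, T)`. -/
theorem lemma2_boundedness (T : ℝ) (hT : 0 < T) (n m : ℕ) (hn : 0 < n) (hm : 0 < m)
    (k : ℝ) (hk : 0 < k) (d : ℝ → ℝ) (dbar : ℝ)
    (hd : ∀ t ∈ Set.Ico (0:ℝ) T, |d t| ≤ dbar)
    (V V' : ℝ → ℝ)
    (hVnonneg : ∀ t ∈ Set.Ico (0:ℝ) T, 0 ≤ V t)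
    (hVderiv : ∀ t ∈ Set.Ico (0:ℝ) T, HasDerivWithinAt V (V' t) (Set.Ico (0:ℝ) T) t)
    (hV'cont : ContinuousOn V' (Set.Ico (0:ℝ) T))
    (hineq : ∀ t ∈ Set.Ico (0:ℝ) T,
      V' t ≤ -k * (T / (T - t)) ^ (n + m) * V t + (T / (T - t)) ^ (n + m) * (d t) ^ 2) :
    ∀ t ∈ Set.Ico (0:ℝ) T, V t ≤ max (V 0) (dbar ^ 2 / k) := by
  intro t ht
  set B := max (V 0) (dbar ^ 2 / k) with hB
  have hdbar0 : 0 ≤ dbar := le_trans (abs_nonneg _) (hd 0 ⟨le_refl 0, hT⟩)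
  have hdB : dbar ^ 2 ≤ k * B := by
    have : dbar ^ 2 / k ≤ B := le_max_right _ _
    calc dbar ^ 2 = k * (dbar ^ 2 / k) := by field_simp
    _ ≤ k * B := by nlinarith
  have hVcont : ContinuousOn V (Set.Ico (0:ℝ) T) := fun x hx =>
    (hVderiv x hx).continuousWithinAt
  refine le_of_forall_pos_le_add (fun ε hε => ?_)
  have key : ∀ x ∈ Set.Icc (0:ℝ) t, V x ≤ B + ε := by
    refine image_le_of_deriv_right_lt_deriv_boundary (f' := V') (B' := fun _ => (0:ℝ))
      ?_ ?_ ?_ (fun x => hasDerivAt_const x (B + ε)) ?_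
    · exact hVcont.mono (fun x hx => ⟨hx.1, lt_of_le_of_lt hx.2 ht.2⟩)
    · intro x hx
      have hx' : x ∈ Set.Ico (0:ℝ) T := ⟨hx.1, lt_trans hx.2 ht.2⟩
      refine (hVderiv x hx').mono_of_mem_nhdsWithin ?_
      have : Set.Ico (0:ℝ) T ∈ nhdsWithin x (Set.Ici x) := by
        refine mem_nhdsWithin.2 ⟨Set.Iio T, isOpen_Iio, hx'.2, ?_⟩
        intro y hy
        exact ⟨le_trans hx'.1 hy.2, hy.1⟩
      exact this
    · exact le_trans (le_max_left _ _) (by linarith)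
    · intro x hx hVx
      have hx' : x ∈ Set.Ico (0:ℝ) T := ⟨hx.1, lt_trans hx.2 ht.2⟩
      have hμ : 0 < (T / (T - x)) ^ (n + m) :=
        pow_pos (div_pos hT (by linarith [hx'.2])) _
      have hdx : (d x) ^ 2 ≤ dbar ^ 2 := by
        have := hd x hx'
        nlinarith [abs_nonneg (d x), sq_abs (d x)]
      have := hineq x hx'
      have hneg : -k * V x + (d x) ^ 2 ≤ -k * ε := by
        rw [hVx]; nlinarith
      calc V' x ≤ -k * (T / (T - x)) ^ (n + m) * V x
            + (T / (T - x)) ^ (n + m) * (d x) ^ 2 := this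
        _ = (T / (T - x)) ^ (n + m) * (-k * V x + (d x) ^ 2) := by ring
        _ ≤ (T / (T - x)) ^ (n + m) * (-k * ε) := by nlinarith
        _ < 0 := mul_neg_of_pos_of_neg hμ (by nlinarith)
  exact key t ⟨ht.1, le_refl t⟩
end

section
/- Let T > 0 and ε > 0, and define μ(t) = (T+ε)/(T+ε−t) for t ∈ [0, T). Let k > 0 and let V : [0, T) → [0, +∞) be differentiable with V′(t) ≤ −k·μ(t)·V(t) for all t ∈ [0, T). Then V(t) ≤ V(0)·((T+ε−t)/(T+ε))^{k(T+ε)} for all t ∈ [0, T); in particular, as t → T⁻, V(t) is eventually bounded by V(0)·(ε/(T+ε))^{k(T+ε)} = V(0)·exp(−k(T+ε)·ln(1+T/ε)). -/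
open Set Filter

/-- Prescribed-time decay estimate on `[0, T)` from the proof of Corollary 1: with
`μ(t) = (T+ε)/(T+ε−t)`, a nonnegative differentiable `V` with `V′ ≤ −k·μ·V` satisfies
`V(t) ≤ V(0)·((T+ε−t)/(T+ε))^(k(T+ε))`; in particular as `t → T⁻` its limsup is bounded by
`V(0)·(ε/(T+ε))^(k(T+ε))`, which equals `V(0)·exp(−k(T+ε)·ln(1+T/ε))`. -/
theorem prescribed_time_decay (T ε : ℝ) (hT : 0 < T) (hε : 0 < ε)
    (k : ℝ) (hk : 0 < k) (V V' : ℝ → ℝ)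
    (hVnonneg : ∀ t ∈ Set.Ico (0:ℝ) T, 0 ≤ V t)
    (hVderiv : ∀ t ∈ Set.Ico (0:ℝ) T, HasDerivWithinAt V (V' t) (Set.Ico (0:ℝ) T) t)
    (hineq : ∀ t ∈ Set.Ico (0:ℝ) T, V' t ≤ -k * ((T + ε) / (T + ε - t)) * V t) :
    (∀ t ∈ Set.Ico (0:ℝ) T,
      V t ≤ V 0 * ((T + ε - t) / (T + ε)) ^ (k * (T + ε))) ∧
    Filter.limsup V (nhdsWithin T (Set.Ico (0:ℝ) T)) ≤
      V 0 * (ε / (T + ε)) ^ (k * (T + ε)) ∧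
    V 0 * (ε / (T + ε)) ^ (k * (T + ε)) =
      V 0 * Real.exp (-(k * (T + ε)) * Real.log (1 + T / ε)) := by
  have hTε : 0 < T + ε := by linarith
  set c : ℝ := k * (T + ε) with hc
  have hcpos : 0 < c := by positivity
  set s : Set ℝ := Set.Ico (0:ℝ) T with hs
  have hpos : ∀ t ∈ s, 0 < T + ε - t := by
    intro t ht
    have := ht.2
    linarith
  set E : ℝ → ℝ := fun t => Real.exp (-c * Real.log (T + ε - t)) with hE
  set g : ℝ → ℝ := fun t => V t * E t with hg
  -- continuity of g on s
  have hVcont : ContinuousOn V s := fun t ht => (hVderiv t ht).continuousWithinAt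
  have hEcont : ContinuousOn E s := by
    apply Real.continuous_exp.comp_continuousOn
    apply ContinuousOn.mul continuousOn_const
    exact Real.continuousOn_log.comp (by fun_prop) (fun t ht => (hpos t ht).ne')
  have hgcont : ContinuousOn g s := hVcont.mul hEcont
  -- derivative at interior points
  have hint : interior s = Set.Ioo (0:ℝ) T := interior_Ico
  set g' : ℝ → ℝ := fun t => V' t * E t + V t * (E t * (c / (T + ε - t))) with hg'
  have hgd : ∀ x ∈ interior s, HasDerivWithinAt g (g' x) (interior s) x := by
    intro x hx
    rw [hint] at hx
    have hxs : x ∈ s := ⟨hx.1.le, hx.2⟩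
    have hmem : s ∈ nhds x := by
      rw [hs]
      exact Ico_mem_nhds hx.1 hx.2
    have hVd : HasDerivAt V (V' x) x := (hVderiv x hxs).hasDerivAt hmem
    have h1 : HasDerivAt (fun t : ℝ => T + ε - t) (-1) x := by
      simpa using (hasDerivAt_id x).const_sub (T + ε)
    have h2 : HasDerivAt (fun t : ℝ => Real.log (T + ε - t)) (-1 / (T + ε - x)) x :=
      h1.log (hpos x hxs).ne'
    have h3 : HasDerivAt (fun t : ℝ => -c * Real.log (T + ε - t))
        (-c * (-1 / (T + ε - x))) x := h2.const_mul (-c)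
    have h4 : HasDerivAt E (E x * (-c * (-1 / (T + ε - x)))) x := h3.exp
    have h5 : HasDerivAt g (V' x * E x + V x * (E x * (-c * (-1 / (T + ε - x))))) x :=
      hVd.mul h4
    have heq : V' x * E x + V x * (E x * (-c * (-1 / (T + ε - x)))) = g' x := by
      rw [hg']
      ring_nf
    rw [heq] at h5
    exact h5.hasDerivWithinAt
  have hgd0 : ∀ x ∈ interior s, g' x ≤ 0 := by
    intro x hx
    rw [hint] at hx
    have hxs : x ∈ s := ⟨hx.1.le, hx.2⟩
    have hEpos : 0 < E x := Real.exp_pos _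
    have hxpos := hpos x hxs
    have h1 := hineq x hxs
    have h2 : V' x * E x ≤ (-k * ((T + ε) / (T + ε - x)) * V x) * E x :=
      mul_le_mul_of_nonneg_right h1 hEpos.le
    have h3 : (-k * ((T + ε) / (T + ε - x)) * V x) * E x
        + V x * (E x * (c / (T + ε - x))) = 0 := by
      rw [hc]
      field_simp
      ring
    rw [hg']
    linarith
  have hanti : AntitoneOn g s :=
    antitoneOn_of_hasDerivWithinAt_nonpos (convex_Ico 0 T) hgcont hgd hgd0
  have h0s : (0:ℝ) ∈ s := ⟨le_refl 0, hT⟩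
  -- the main pointwise bound
  have hmain : ∀ t ∈ s, V t ≤ V 0 * ((T + ε - t) / (T + ε)) ^ c := by
    intro t ht
    have hgt : g t ≤ g 0 := hanti h0s ht ht.1
    have hEtpos : 0 < E t := Real.exp_pos _
    have htpos := hpos t ht
    have hrpow : ((T + ε - t) / (T + ε)) ^ c
        = Real.exp ((Real.log (T + ε - t) - Real.log (T + ε)) * c) := by
      rw [Real.rpow_def_of_pos (div_pos htpos hTε), Real.log_div htpos.ne' hTε.ne']
    have hgt' : V t * E t ≤ V 0 * E 0 := hgt
    have h' : V t ≤ V 0 * E 0 / E t := (le_div_iff₀ hEtpos).mpr hgt'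
    have h'' : V t ≤ V 0 * (E 0 / E t) := by rw [mul_div_assoc] at h'; exact h'
    refine h''.trans_eq ?_
    rw [hrpow]
    congr 1
    simp only [hE, sub_zero]
    rw [← Real.exp_sub]
    congr 1
    ring
  refine ⟨hmain, ?_, ?_⟩
  · -- limsup bound
    have hne : (nhdsWithin T s).NeBot := by
      apply mem_closure_iff_nhdsWithin_neBot.mp
      rw [hs, closure_Ico hT.ne]
      exact ⟨hT.le, le_refl T⟩
    set B : ℝ → ℝ := fun t => V 0 * ((T + ε - t) / (T + ε)) ^ c with hB
    have hBtend : Tendsto B (nhdsWithin T s) (nhds (V 0 * (ε / (T + ε)) ^ c)) := by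
      have hca : ContinuousAt B T := by
        apply ContinuousAt.mul continuousAt_const
        apply ContinuousAt.rpow_const (by fun_prop)
        left
        have : T + ε - T = ε := by ring
        simp only [this]
        positivity
      have : B T = V 0 * (ε / (T + ε)) ^ c := by
        simp only [hB]
        norm_num
      exact this ▸ hca.continuousWithinAt.tendsto
    have hVB : ∀ᶠ t in nhdsWithin T s, V t ≤ B t :=
      eventually_mem_nhdsWithin.mono fun t ht => hmain t ht
    have hVlb : ∀ᶠ t in nhdsWithin T s, (0:ℝ) ≤ V t :=
      eventually_mem_nhdsWithin.mono fun t ht => hVnonneg t ht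
    calc limsup V (nhdsWithin T s)
        ≤ limsup B (nhdsWithin T s) := by
          exact limsup_le_limsup hVB
            (isCoboundedUnder_le_of_eventually_le _ hVlb) hBtend.isBoundedUnder_le
      _ = V 0 * (ε / (T + ε)) ^ c := hBtend.limsup_eq
  · -- the exp/log identity
    have h1 : (1 : ℝ) + T / ε = (ε / (T + ε))⁻¹ := by
      field_simp
      ring
    have h2 : Real.log (1 + T / ε) = -Real.log (ε / (T + ε)) := by
      rw [h1, Real.log_inv]
    rw [h2, Real.rpow_def_of_pos (div_pos hε hTε), neg_mul_neg, mul_comm c]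
end

section
/- Let T ≥ 0, k > 0, μ̄ > 0, and let σ : [T, ∞) → [0, ∞) be continuous with ∫_T^∞ σ(τ) dτ < ∞. Let V : [T, ∞) → [0, +∞) be continuously differentiable with V′(t) ≤ −k·μ̄·V(t) + μ̄·σ(t) for all t ≥ T. Then V(t) → 0 as t → ∞. -/
open Set Filter MeasureTheory

/-- Asymptotic conclusion of Corollary 1: a nonnegative C¹ function on `[T, ∞)` with
`V′ ≤ −k·μ̄·V + μ̄·σ(t)` for an integrable nonnegative continuous forcing `σ`
converges to zero as `t → ∞`. -/
theorem corollary1_asymptotic (T k μbar : ℝ) (hT : 0 ≤ T) (hk : 0 < k) (hμbar : 0 < μbar)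
    (σ V V' : ℝ → ℝ)
    (hσcont : ContinuousOn σ (Set.Ici T)) (hσnonneg : ∀ t ≥ T, 0 ≤ σ t)
    (hσint : MeasureTheory.IntegrableOn σ (Set.Ici T))
    (hVnonneg : ∀ t ≥ T, 0 ≤ V t)
    (hVderiv : ∀ t ≥ T, HasDerivWithinAt V (V' t) (Set.Ici T) t)
    (hV'cont : ContinuousOn V' (Set.Ici T))
    (hineq : ∀ t ≥ T, V' t ≤ -k * μbar * V t + μbar * σ t) :
    Tendsto V atTop (nhds 0) := by
  set c : ℝ := k * μbar with hc
  have hcpos : 0 < c := mul_pos hk hμbar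
  set f : ℝ → ℝ := fun s => Real.exp (c * s) * σ s with hfdef
  have hfcont : ContinuousOn f (Set.Ici T) :=
    ((Real.continuous_exp.comp (continuous_const.mul continuous_id)).continuousOn).mul hσcont
  have huIcc : ∀ a b : ℝ, T ≤ a → T ≤ b → Set.uIcc a b ⊆ Set.Ici T := by
    intro a b ha hb x hx
    exact le_trans (le_min ha hb) hx.1
  have hfInt : ∀ a b : ℝ, T ≤ a → T ≤ b → IntervalIntegrable f volume a b := by
    intro a b ha hb
    exact (hfcont.mono (huIcc a b ha hb)).intervalIntegrable
  have hσInt' : ∀ a b : ℝ, T ≤ a → T ≤ b → IntervalIntegrable σ volume a b := by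
    intro a b ha hb
    exact (hσint.mono_set (huIcc a b ha hb)).intervalIntegrable
  set P : ℝ → ℝ := fun t => ∫ s in T..t, f s with hPdef
  have hPcont : ContinuousOn P (Set.Ici T) := by
    intro t ht
    have h1 : ContinuousOn P (Set.uIcc T (t + 1)) :=
      intervalIntegral.continuousOn_primitive_interval
        ((hfcont.mono (huIcc T (t + 1) le_rfl (by linarith [ht.out]))).integrableOn_compact
          (by rw [Set.uIcc_of_le (by linarith [ht.out])]; exact isCompact_Icc))
    rw [Set.uIcc_of_le (by linarith [ht.out])] at h1
    refine (h1 t ⟨ht, by linarith⟩).mono_of_mem_nhdsWithin ?_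
    rw [← Set.Ici_inter_Iic]
    exact Filter.inter_mem self_mem_nhdsWithin
      (mem_nhdsWithin_of_mem_nhds (Iic_mem_nhds (by linarith)))
  have hVcont : ContinuousOn V (Set.Ici T) := fun t ht => (hVderiv t ht).continuousWithinAt
  set G : ℝ → ℝ := fun t => Real.exp (c * t) * V t - μbar * P t with hGdef
  have hGcont : ContinuousOn G (Set.Ici T) :=
    (((Real.continuous_exp.comp (continuous_const.mul continuous_id)).continuousOn).mul
      hVcont).sub (continuousOn_const.mul hPcont)
  -- G is antitone on [T, ∞)
  have hGanti : AntitoneOn G (Set.Ici T) := by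
    apply antitoneOn_of_hasDerivWithinAt_nonpos (convex_Ici T) hGcont
      (f' := fun t => (Real.exp (c * t) * c * V t + Real.exp (c * t) * V' t) - μbar * f t)
    · intro t ht
      rw [interior_Ici] at ht ⊢
      have htT : T ≤ t := le_of_lt ht
      have hmem : Set.Ici T ∈ nhds t := Ici_mem_nhds ht
      have hV : HasDerivAt V (V' t) t := (hVderiv t htT).hasDerivAt hmem
      have hlin : HasDerivAt (fun u : ℝ => c * u) (c * 1) t := (hasDerivAt_id t).const_mul c
      have hexp : HasDerivAt (fun u => Real.exp (c * u)) (Real.exp (c * t) * (c * 1)) t :=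
        hlin.exp
      have hmeas : StronglyMeasurableAtFilter f (nhds t) :=
        ⟨Set.Ici T, hmem, hfcont.aestronglyMeasurable measurableSet_Ici⟩
      have hP : HasDerivAt P (f t) t :=
        intervalIntegral.integral_hasDerivAt_right (hfInt T t le_rfl htT) hmeas
          (hfcont.continuousAt hmem)
      have hG : HasDerivAt G
          ((Real.exp (c * t) * c * V t + Real.exp (c * t) * V' t) - μbar * f t) t := by
        have := (hexp.mul hV).sub (hP.const_mul μbar)
        exact (this : HasDerivAt G _ t).congr_deriv (by ring)
      exact hG.hasDerivWithinAt
    · intro t ht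
      rw [interior_Ici] at ht
      have htT : T ≤ t := le_of_lt ht
      have h1 := mul_le_mul_of_nonneg_left (hineq t htT) (Real.exp_pos (c * t)).le
      have h1' : Real.exp (c * t) * V' t ≤ Real.exp (c * t) * (-c * V t + μbar * σ t) := by
        simp only [hc] at h1 ⊢; linarith
      simp only [hfdef]
      nlinarith [h1']
  -- exponential identities
  have e1 : ∀ t : ℝ, Real.exp (-(c * t)) * Real.exp (c * t) = 1 := by
    intro t; rw [← Real.exp_add]; simp
  -- the Gronwall bound
  have hbound : ∀ t ≥ T, V t ≤ Real.exp (c * (T - t)) * V T +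
      μbar * (Real.exp (-(c * t)) * P t) := by
    intro t ht
    have hG1 : G t ≤ G T := hGanti self_mem_Ici ht ht
    have hPT : P T = 0 := intervalIntegral.integral_same
    have h1 : Real.exp (c * t) * V t ≤ Real.exp (c * T) * V T + μbar * P t := by
      simp only [hGdef, hPT, mul_zero, sub_zero] at hG1
      linarith
    have e2 : Real.exp (-(c * t)) * Real.exp (c * T) = Real.exp (c * (T - t)) := by
      rw [← Real.exp_add]; ring_nf
    calc V t = (Real.exp (-(c * t)) * Real.exp (c * t)) * V t := by rw [e1, one_mul]
      _ = Real.exp (-(c * t)) * (Real.exp (c * t) * V t) := by ring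
      _ ≤ Real.exp (-(c * t)) * (Real.exp (c * T) * V T + μbar * P t) :=
          mul_le_mul_of_nonneg_left h1 (Real.exp_pos _).le
      _ = Real.exp (c * (T - t)) * V T + μbar * (Real.exp (-(c * t)) * P t) := by
          rw [← e2]; ring
  -- limit of the first term
  have hlinatBot : Tendsto (fun t : ℝ => c * (T - t)) atTop atBot := by
    have h1 : Tendsto (fun t : ℝ => c * t) atTop atTop :=
      Tendsto.const_mul_atTop hcpos tendsto_id
    have h2 : Tendsto (fun t : ℝ => -(c * t)) atTop atBot := tendsto_neg_atTop_atBot.comp h1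
    have h3 := tendsto_atBot_add_const_left atTop (c * T) h2
    refine h3.congr fun t => by ring
  have L1 : Tendsto (fun t => Real.exp (c * (T - t)) * V T) atTop (nhds 0) := by
    have := (Real.tendsto_exp_atBot.comp hlinatBot).mul_const (V T)
    simpa using this
  -- limit of the second term
  have L2 : Tendsto (fun t => Real.exp (-(c * t)) * P t) atTop (nhds 0) := by
    rw [NormedAddCommGroup.tendsto_nhds_zero]
    intro ε hε
    have hσIoi : IntegrableOn σ (Set.Ioi T) := hσint.mono_set Set.Ioi_subset_Ici_self
    have hFt : Tendsto (fun t => ∫ s in T..t, σ s) atTop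
        (nhds (∫ s in Set.Ioi T, σ s)) :=
      MeasureTheory.intervalIntegral_tendsto_integral_Ioi T hσIoi tendsto_id
    obtain ⟨S₀, hS₀⟩ := (Metric.tendsto_atTop.mp hFt) (ε / 4) (by positivity)
    set S : ℝ := max S₀ T with hSdef
    have hTS : T ≤ S := le_max_right _ _
    have hS : ∀ t ≥ S, dist (∫ s in T..t, σ s) (∫ s in Set.Ioi T, σ s) < ε / 4 :=
      fun t htS => hS₀ t (le_trans (le_max_left _ _) htS)
    have htail : ∀ t ≥ S, (∫ s in S..t, σ s) < ε / 2 := by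
      intro t htS
      have htT : T ≤ t := hTS.trans htS
      have hsplit : (∫ s in T..S, σ s) + (∫ s in S..t, σ s) = ∫ s in T..t, σ s :=
        intervalIntegral.integral_add_adjacent_intervals (hσInt' T S le_rfl hTS)
          (hσInt' S t hTS htT)
      have h1 := hS t htS
      have h2 := hS S le_rfl
      rw [Real.dist_eq] at h1 h2
      have h1' := abs_lt.mp h1
      have h2' := abs_lt.mp h2
      linarith [h1'.1, h1'.2, h2'.1, h2'.2]
    set C : ℝ := ∫ s in T..S, f s with hCdef
    have hC : Tendsto (fun t => Real.exp (-(c * t)) * C) atTop (nhds 0) := by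
      have h2 : Tendsto (fun t : ℝ => -(c * t)) atTop atBot :=
        tendsto_neg_atTop_atBot.comp (Tendsto.const_mul_atTop hcpos tendsto_id)
      have := (Real.tendsto_exp_atBot.comp h2).mul_const C
      simpa using this
    have hev := (NormedAddCommGroup.tendsto_nhds_zero.mp hC) (ε / 2) (by positivity)
    filter_upwards [hev, eventually_ge_atTop S] with t hevt htS
    have htT : T ≤ t := hTS.trans htS
    have hsplit : C + (∫ s in S..t, f s) = P t :=
      intervalIntegral.integral_add_adjacent_intervals (hfInt T S le_rfl hTS)
        (hfInt S t hTS htT)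
    have hb1 : (∫ s in S..t, f s) ≤ Real.exp (c * t) * ∫ s in S..t, σ s := by
      rw [← intervalIntegral.integral_const_mul]
      refine intervalIntegral.integral_mono_on htS (hfInt S t hTS htT)
        ((hσInt' S t hTS htT).const_mul _) ?_
      intro s hs
      have hst : Real.exp (c * s) ≤ Real.exp (c * t) :=
        Real.exp_le_exp.2 (mul_le_mul_of_nonneg_left hs.2 hcpos.le)
      exact mul_le_mul_of_nonneg_right hst (hσnonneg s (hTS.trans hs.1))
    have hb2 : Real.exp (-(c * t)) * (∫ s in S..t, f s) ≤ ∫ s in S..t, σ s := by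
      calc Real.exp (-(c * t)) * (∫ s in S..t, f s)
          ≤ Real.exp (-(c * t)) * (Real.exp (c * t) * ∫ s in S..t, σ s) :=
            mul_le_mul_of_nonneg_left hb1 (Real.exp_pos _).le
        _ = (Real.exp (-(c * t)) * Real.exp (c * t)) * ∫ s in S..t, σ s := by ring
        _ = ∫ s in S..t, σ s := by rw [e1, one_mul]
    have hPnonneg : 0 ≤ P t := by
      refine intervalIntegral.integral_nonneg htT fun s hs => ?_
      exact mul_nonneg (Real.exp_pos _).le (hσnonneg s hs.1)
    have hCterm : Real.exp (-(c * t)) * C < ε / 2 := by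
      rw [Real.norm_eq_abs] at hevt
      calc Real.exp (-(c * t)) * C ≤ |Real.exp (-(c * t)) * C| := le_abs_self _
        _ < ε / 2 := hevt
    rw [Real.norm_eq_abs, abs_of_nonneg (mul_nonneg (Real.exp_pos _).le hPnonneg)]
    have hPsplit : Real.exp (-(c * t)) * P t =
        Real.exp (-(c * t)) * C + Real.exp (-(c * t)) * (∫ s in S..t, f s) := by
      rw [← hsplit]; ring
    have := htail t htS
    linarith
  -- squeeze
  have hBound0 : Tendsto (fun t => Real.exp (c * (T - t)) * V T +
      μbar * (Real.exp (-(c * t)) * P t)) atTop (nhds 0) := by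
    have := L1.add (L2.const_mul μbar)
    simpa using this
  refine squeeze_zero' ?_ ?_ hBound0
  · filter_upwards [eventually_ge_atTop T] with t ht using hVnonneg t ht
  · filter_upwards [eventually_ge_atTop T] with t ht using hbound t ht
end

section
/- Let T > 0 and ε > 0, define μ̄ := 1 + T/ε and μ : [0,∞) → ℝ by μ(t) = (T+ε)/(T+ε−t) for 0 ≤ t < T and μ(t) = μ̄ for t ≥ T. Let k > 0 and let σ : [0, ∞) → [0, ∞) be continuous with ∫_0^t σ(τ) dτ ≤ σ̄ for all t ≥ 0, where σ̄ > 0 is a constant. Suppose V : [0, ∞) → [0, +∞) is continuous, is differentiable on [0, T) with V′(t) ≤ −k·μ(t)·V(t) there, and is continuously differentiable on [T, ∞) with V′(t) ≤ −k·μ̄·V(t) + μ̄·σ(t) there. Then V is bounded on [0, ∞), V(T) ≤ V(0)·(ε/(T+ε))^{k(T+ε)}, and V(t) → 0 as t → ∞. -/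
open Set Filter

/-- Corollary 1: with the bounded time-varying gain `μ(t) = (T+ε)/(T+ε−t)` on `[0, T)` and
`μ(t) = μ̄ = 1 + T/ε` on `[T, ∞)`, a nonnegative continuous `V` satisfying `V′ ≤ −k·μ·V`
on `[0, T)` and `V′ ≤ −k·μ̄·V + μ̄·σ(t)` on `[T, ∞)` (with `σ ≥ 0` continuous and
`∫_0^t σ ≤ σ̄`) is bounded, satisfies `V(T) ≤ V(0)·(ε/(T+ε))^(k(T+ε))`, and
tends to zero as `t → ∞`. -/
theorem corollary1 (T ε : ℝ) (hT : 0 < T) (hε : 0 < ε)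
    (μ : ℝ → ℝ)
    (hμ1 : ∀ t : ℝ, 0 ≤ t → t < T → μ t = (T + ε) / (T + ε - t))
    (hμ2 : ∀ t : ℝ, T ≤ t → μ t = 1 + T / ε)
    (k σbar : ℝ) (hk : 0 < k) (hσbar : 0 < σbar)
    (σ : ℝ → ℝ) (hσcont : ContinuousOn σ (Set.Ici (0:ℝ)))
    (hσnonneg : ∀ t ≥ (0:ℝ), 0 ≤ σ t)
    (hσint : ∀ t ≥ (0:ℝ), ∫ τ in (0:ℝ)..t, σ τ ≤ σbar)
    (V V' : ℝ → ℝ)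
    (hVcont : ContinuousOn V (Set.Ici (0:ℝ)))
    (hVnonneg : ∀ t ≥ (0:ℝ), 0 ≤ V t)
    (hVderiv1 : ∀ t ∈ Set.Ico (0:ℝ) T, HasDerivWithinAt V (V' t) (Set.Ico (0:ℝ) T) t)
    (hineq1 : ∀ t ∈ Set.Ico (0:ℝ) T, V' t ≤ -k * μ t * V t)
    (hVderiv2 : ∀ t ≥ T, HasDerivWithinAt V (V' t) (Set.Ici T) t)
    (hV'cont : ContinuousOn V' (Set.Ici T))
    (hineq2 : ∀ t ≥ T, V' t ≤ -k * (1 + T / ε) * V t + (1 + T / ε) * σ t) :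
    (∃ M : ℝ, ∀ t ≥ (0:ℝ), V t ≤ M) ∧
    V T ≤ V 0 * (ε / (T + ε)) ^ (k * (T + ε)) ∧
    Tendsto V atTop (nhds 0) := by
  have hTε : 0 < T + ε := by linarith
  set c : ℝ := k * (T + ε) with hcdef
  have hcpos : 0 < c := by positivity
  set b : ℝ := 1 + T / ε with hbdef
  have hbpos : 0 < b := by positivity
  set a : ℝ := k * b with hadef
  have hapos : 0 < a := by positivity
  -- ### Part A : behaviour on [0, T]
  set ψ : ℝ → ℝ := fun t => Real.exp (c * (Real.log (T + ε) - Real.log (T + ε - t))) with hψdef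
  have hψpos : ∀ t, 0 < ψ t := fun t => Real.exp_pos _
  have hψderiv : ∀ t ∈ Set.Ioo (0:ℝ) T, HasDerivAt ψ (c / (T + ε - t) * ψ t) t := by
    intro t ht
    have htpos : 0 < T + ε - t := by linarith [ht.2]
    have hne : T + ε - t ≠ 0 := ne_of_gt htpos
    have h1 : HasDerivAt (fun s : ℝ => T + ε - s) (-1) t := by
      simpa using (hasDerivAt_id t).const_sub (T + ε)
    have h2 : HasDerivAt (fun s : ℝ => Real.log (T + ε - s)) (-1 / (T + ε - t)) t :=
      h1.log hne
    have h3 : HasDerivAt (fun s : ℝ => c * (Real.log (T + ε) - Real.log (T + ε - s)))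
        (c * (0 - -1 / (T + ε - t))) t :=
      ((hasDerivAt_const t (Real.log (T + ε))).sub h2).const_mul c
    have h4 := h3.exp
    convert h4 using 1
    rw [hψdef]
    field_simp
    ring
  have hgAnti : AntitoneOn (fun t => V t * ψ t) (Set.Icc 0 T) := by
    apply antitoneOn_of_hasDerivWithinAt_nonpos (convex_Icc 0 T)
      (f' := fun t => V' t * ψ t + V t * (c / (T + ε - t) * ψ t))
    · apply (hVcont.mono (fun x hx => hx.1)).mul
      apply Real.continuous_exp.comp_continuousOn
      apply continuousOn_const.mul
      apply continuousOn_const.sub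
      apply Real.continuousOn_log.comp
        ((continuous_const.sub continuous_id).continuousOn)
      intro x hx
      simp only [mem_compl_iff, mem_singleton_iff]
      have : 0 < T + ε - x := by
        have := hx.2; linarith
      exact ne_of_gt this
    · intro t ht
      rw [interior_Icc] at ht
      have hV : HasDerivAt V (V' t) t :=
        (hVderiv1 t ⟨ht.1.le, ht.2⟩).hasDerivAt (Ico_mem_nhds ht.1 ht.2)
      exact ((hV.mul (hψderiv t ht)).hasDerivWithinAt).mono interior_subset
    · intro t ht
      rw [interior_Icc] at ht
      have htpos : 0 < T + ε - t := by linarith [ht.2]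
      have h1 := hineq1 t ⟨ht.1.le, ht.2⟩
      rw [hμ1 t ht.1.le ht.2] at h1
      have h1' : V' t ≤ -(c / (T + ε - t)) * V t := by
        have : -k * ((T + ε) / (T + ε - t)) = -(c / (T + ε - t)) := by
          rw [hcdef]; field_simp
        linarith [h1, this ▸ h1]
      have h2 := mul_le_mul_of_nonneg_right h1' (hψpos t).le
      nlinarith [h2]
  have hψ0 : ψ 0 = 1 := by simp [hψdef]
  have hψT : ψ T = Real.exp (c * (Real.log (T + ε) - Real.log ε)) := by
    show Real.exp (c * (Real.log (T + ε) - Real.log (T + ε - T))) = _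
    rw [show T + ε - T = ε by ring]
  have hVTkey : V T * ψ T ≤ V 0 := by
    have := hgAnti ⟨le_rfl, hT.le⟩ ⟨hT.le, le_rfl⟩ hT.le
    simpa only [hψ0, mul_one] using this
  have hψge1 : ∀ t ∈ Set.Icc (0:ℝ) T, 1 ≤ ψ t := by
    intro t ht
    apply Real.one_le_exp
    have h1 : 0 < T + ε - t := by linarith [ht.2]
    have h2 : Real.log (T + ε - t) ≤ Real.log (T + ε) :=
      Real.log_le_log h1 (by linarith [ht.1])
    nlinarith [hcpos]
  have hVle0 : ∀ t ∈ Set.Icc (0:ℝ) T, V t ≤ V 0 := by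
    intro t ht
    have h1 : V t ≤ V t * ψ t :=
      le_mul_of_one_le_right (hVnonneg t ht.1) (hψge1 t ht)
    have h2 := hgAnti ⟨le_rfl, hT.le⟩ ht ht.1
    simp only [hψ0, mul_one] at h2
    linarith
  have goal2 : V T ≤ V 0 * (ε / (T + ε)) ^ (k * (T + ε)) := by
    have hrw : (ε / (T + ε)) ^ (k * (T + ε)) =
        Real.exp (-(c * (Real.log (T + ε) - Real.log ε))) := by
      rw [Real.rpow_def_of_pos (div_pos hε hTε), Real.log_div (ne_of_gt hε) (ne_of_gt hTε),
        ← hcdef]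
      ring_nf
    rw [hrw]
    have h2 := mul_le_mul_of_nonneg_right hVTkey
      (Real.exp_pos (-(c * (Real.log (T + ε) - Real.log ε)))).le
    calc V T = V T * ψ T * Real.exp (-(c * (Real.log (T + ε) - Real.log ε))) := by
          rw [hψT, mul_assoc, ← Real.exp_add]; simp
      _ ≤ V 0 * Real.exp (-(c * (Real.log (T + ε) - Real.log ε))) := h2
  -- ### Part B : behaviour on [T, ∞)
  set f2 : ℝ → ℝ := fun τ => Real.exp (a * (τ - T)) * σ τ with hf2def
  have hf2cont : ContinuousOn f2 (Set.Ici 0) :=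
    (Real.continuous_exp.comp
      (continuous_const.mul (continuous_id.sub continuous_const))).continuousOn.mul hσcont
  have hf2ii : ∀ s t : ℝ, 0 ≤ s → s ≤ t → IntervalIntegrable f2 MeasureTheory.volume s t := by
    intro s t hs hst
    apply ContinuousOn.intervalIntegrable
    apply hf2cont.mono
    rw [Set.uIcc_of_le hst]
    intro x hx; exact le_trans hs hx.1
  have hσii : ∀ s t : ℝ, 0 ≤ s → s ≤ t → IntervalIntegrable σ MeasureTheory.volume s t := by
    intro s t hs hst
    apply ContinuousOn.intervalIntegrable
    apply hσcont.mono
    rw [Set.uIcc_of_le hst]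
    intro x hx; exact le_trans hs hx.1
  set F : ℝ → ℝ := fun t => ∫ τ in T..t, f2 τ with hFdef
  have hkey : ∀ t ≥ T, V t * Real.exp (a * (t - T)) ≤ V T + b * F t := by
    intro t ht
    rcases eq_or_lt_of_le ht with heq | hlt
    · subst heq; simp [hFdef]
    have hAnti : AntitoneOn (fun s => V s * Real.exp (a * (s - T)) - b * F s)
        (Set.Icc T t) := by
      apply antitoneOn_of_hasDerivWithinAt_nonpos (convex_Icc T t)
        (f' := fun s => (V' s * Real.exp (a * (s - T)) +
          V s * (a * Real.exp (a * (s - T)))) - b * f2 s)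
      · apply ContinuousOn.sub
        · exact (hVcont.mono (fun x hx => le_trans hT.le hx.1)).mul
            (Real.continuous_exp.comp
              (continuous_const.mul (continuous_id.sub continuous_const))).continuousOn
        · apply continuousOn_const.mul
          have hint : MeasureTheory.IntegrableOn f2 (Set.uIcc T t) MeasureTheory.volume := by
            rw [Set.uIcc_of_le ht]
            exact (hf2cont.mono (fun x hx => le_trans hT.le hx.1)).integrableOn_Icc
          simpa [hFdef] using
            (intervalIntegral.continuousOn_primitive_interval hint).mono
              (by rw [Set.uIcc_of_le ht])
      · intro s hs
        rw [interior_Icc] at hs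
        have hsT : T < s := hs.1
        have hs0 : 0 < s := lt_trans hT hsT
        have hV : HasDerivAt V (V' s) s :=
          (hVderiv2 s hsT.le).hasDerivAt (Ici_mem_nhds hsT)
        have hE : HasDerivAt (fun s : ℝ => Real.exp (a * (s - T)))
            (a * Real.exp (a * (s - T))) s := by
          have := (((hasDerivAt_id s).sub_const T).const_mul a).exp
          simpa [mul_comm] using this
        have hF : HasDerivAt F (f2 s) s := by
          apply intervalIntegral.integral_hasDerivAt_right
            (hf2ii T s hT.le hsT.le)
          · exact ContinuousOn.stronglyMeasurableAtFilter isOpen_Ioi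
              (hf2cont.mono (fun x hx => le_of_lt hx)) s hs0
          · exact (hf2cont.mono (fun x hx => le_of_lt hx)).continuousAt
              (Ioi_mem_nhds hs0)
        exact (((hV.mul hE).sub (hF.const_mul b)).hasDerivWithinAt).mono interior_subset
      · intro s hs
        rw [interior_Icc] at hs
        have hi := hineq2 s hs.1.le
        have hepos : 0 < Real.exp (a * (s - T)) := Real.exp_pos _
        have h2 := mul_le_mul_of_nonneg_right hi hepos.le
        have : (-(k * b) * V s + b * σ s) * Real.exp (a * (s - T)) +
            V s * (a * Real.exp (a * (s - T))) -
            b * (Real.exp (a * (s - T)) * σ s) = 0 := by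
          rw [hadef]; ring
        simp only [hf2def]
        nlinarith [h2]
    have h := hAnti ⟨le_rfl, ht⟩ ⟨ht, le_rfl⟩ ht
    simp only [hFdef, intervalIntegral.integral_same, sub_self, mul_zero,
      Real.exp_zero, mul_one, sub_zero] at h
    linarith
  have hσTt : ∀ s t : ℝ, T ≤ s → s ≤ t → (∫ τ in s..t, σ τ) =
      (∫ τ in (0:ℝ)..t, σ τ) - (∫ τ in (0:ℝ)..s, σ τ) := by
    intro s t hs hst
    have h := intervalIntegral.integral_add_adjacent_intervals
      (hσii 0 s le_rfl (le_trans hT.le hs))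
      (hσii s t (le_trans hT.le hs) hst)
    linarith [h]
  have hσTtle : ∀ t ≥ T, (∫ τ in T..t, σ τ) ≤ σbar := by
    intro t ht
    rw [hσTt T t le_rfl ht]
    have h1 : 0 ≤ ∫ τ in (0:ℝ)..T, σ τ :=
      intervalIntegral.integral_nonneg hT.le (fun τ hτ => hσnonneg τ hτ.1)
    linarith [hσint t (le_trans hT.le ht)]
  have hFbound : ∀ s t : ℝ, T ≤ s → s ≤ t →
      (∫ τ in s..t, f2 τ) ≤ Real.exp (a * (t - T)) * ∫ τ in s..t, σ τ := by
    intro s t hs hst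
    have h0s : (0:ℝ) ≤ s := le_trans hT.le hs
    calc (∫ τ in s..t, f2 τ) ≤ ∫ τ in s..t, Real.exp (a * (t - T)) * σ τ := by
          apply intervalIntegral.integral_mono_on hst (hf2ii s t h0s hst)
            ((hσii s t h0s hst).const_mul _)
          intro x hx
          have : Real.exp (a * (x - T)) ≤ Real.exp (a * (t - T)) := by
            apply Real.exp_le_exp.2
            have := hx.2
            nlinarith [hapos]
          exact mul_le_mul_of_nonneg_right this (hσnonneg x (le_trans h0s hx.1))
      _ = Real.exp (a * (t - T)) * ∫ τ in s..t, σ τ := by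
          rw [intervalIntegral.integral_const_mul]
  have hFnonneg : ∀ t ≥ T, 0 ≤ F t := by
    intro t ht
    apply intervalIntegral.integral_nonneg ht
    intro τ hτ
    exact mul_nonneg (Real.exp_pos _).le (hσnonneg τ (le_trans hT.le hτ.1))
  -- Boundedness
  have goal1 : ∃ M : ℝ, ∀ t ≥ (0:ℝ), V t ≤ M := by
    refine ⟨V 0 + b * σbar, fun t ht => ?_⟩
    rcases le_or_gt t T with h | h
    · have := hVle0 t ⟨ht, h⟩
      nlinarith [hbpos, hσbar]
    · have h1 := hkey t h.le
      have h2 : F t ≤ Real.exp (a * (t - T)) * σbar := by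
        calc F t ≤ Real.exp (a * (t - T)) * ∫ τ in T..t, σ τ :=
              hFbound T t le_rfl h.le
          _ ≤ Real.exp (a * (t - T)) * σbar := by
              exact mul_le_mul_of_nonneg_left (hσTtle t h.le) (Real.exp_pos _).le
      have he1 : 1 ≤ Real.exp (a * (t - T)) := by
        apply Real.one_le_exp
        nlinarith [hapos]
      have hV0 : 0 ≤ V 0 := hVnonneg 0 le_rfl
      have hVT0 : V T ≤ V 0 := hVle0 T ⟨hT.le, le_rfl⟩
      have h3 : V t * Real.exp (a * (t - T)) ≤
          (V 0 + b * σbar) * Real.exp (a * (t - T)) := by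
        have e1 : V 0 * 1 ≤ V 0 * Real.exp (a * (t - T)) :=
          mul_le_mul_of_nonneg_left he1 hV0
        have e2 : b * F t ≤ b * (Real.exp (a * (t - T)) * σbar) :=
          mul_le_mul_of_nonneg_left h2 hbpos.le
        linarith [h1, e1, e2, hVT0]
      exact le_of_mul_le_mul_right h3 (lt_of_lt_of_le zero_lt_one he1)
  -- Tendsto 0
  set G : ℝ → ℝ := fun u => ∫ τ in (0:ℝ)..u, σ τ with hGdef
  have hGbdd : ∀ t ≥ T, G t ≤ σbar := fun t ht => hσint t (le_trans hT.le ht)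
  have hGS : (G '' Set.Ici T).Nonempty := ⟨G T, ⟨T, Set.mem_Ici.2 le_rfl, rfl⟩⟩
  have hGbddA : BddAbove (G '' Set.Ici T) := by
    refine ⟨σbar, ?_⟩
    rintro y ⟨x, hx, rfl⟩
    exact hGbdd x hx
  set ℓ : ℝ := sSup (G '' Set.Ici T) with hℓdef
  have hsmall : ∀ δ : ℝ, 0 < δ → ∃ s ≥ T, ∀ t ≥ s, G t - G s < δ := by
    intro δ hδ
    obtain ⟨y, ⟨s, hsT, rfl⟩, hy⟩ := exists_lt_of_lt_csSup hGS
      (show ℓ - δ < ℓ by linarith)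
    refine ⟨s, hsT, fun t hts => ?_⟩
    have : G t ≤ ℓ := le_csSup hGbddA ⟨t, Set.mem_Ici.2 (le_trans hsT hts), rfl⟩
    linarith
  have hexpc : ∀ s : ℝ, Tendsto (fun t => Real.exp (a * (s - t))) atTop (nhds 0) := by
    intro s
    apply Real.tendsto_exp_atBot.comp
    have h1 : Tendsto (fun t : ℝ => s - t) atTop atBot :=
      tendsto_atBot_add_const_left atTop s tendsto_neg_atTop_atBot
    exact h1.const_mul_atBot hapos
  set E : ℝ → ℝ := fun t => Real.exp (-(a * (t - T))) * F t with hEdef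
  have hE0 : Tendsto E atTop (nhds 0) := by
    rw [tendsto_order]
    constructor
    · intro x hx
      filter_upwards [eventually_ge_atTop T] with t ht
      have := mul_nonneg (Real.exp_pos (-(a * (t - T)))).le (hFnonneg t ht)
      calc x < 0 := hx
        _ ≤ E t := this
    · intro δ hδ
      obtain ⟨s, hsT, hs⟩ := hsmall (δ / 2) (by linarith)
      have hEb : ∀ t ≥ s, E t ≤ Real.exp (a * (s - t)) * σbar + δ / 2 := by
        intro t hts
        have hTt : T ≤ t := le_trans hsT hts
        have hsplit : F t = (∫ τ in T..s, f2 τ) + ∫ τ in s..t, f2 τ := by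
          rw [hFdef]
          exact (intervalIntegral.integral_add_adjacent_intervals
            (hf2ii T s hT.le hsT) (hf2ii s t (le_trans hT.le hsT) hts)).symm
        have h1 : (∫ τ in T..s, f2 τ) ≤ Real.exp (a * (s - T)) * σbar := by
          calc (∫ τ in T..s, f2 τ) ≤ Real.exp (a * (s - T)) * ∫ τ in T..s, σ τ :=
                hFbound T s le_rfl hsT
            _ ≤ Real.exp (a * (s - T)) * σbar :=
                mul_le_mul_of_nonneg_left (hσTtle s hsT) (Real.exp_pos _).le
        have h2 : (∫ τ in s..t, f2 τ) ≤ Real.exp (a * (t - T)) * (δ / 2) := by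
          calc (∫ τ in s..t, f2 τ) ≤ Real.exp (a * (t - T)) * ∫ τ in s..t, σ τ :=
                hFbound s t hsT hts
            _ ≤ Real.exp (a * (t - T)) * (δ / 2) := by
                apply mul_le_mul_of_nonneg_left _ (Real.exp_pos _).le
                rw [hσTt s t hsT hts]
                exact (hs t hts).le
        have hepos : 0 < Real.exp (-(a * (t - T))) := Real.exp_pos _
        have hEt : E t ≤ Real.exp (-(a * (t - T))) *
            (Real.exp (a * (s - T)) * σbar + Real.exp (a * (t - T)) * (δ / 2)) := by
          rw [hEdef]
          apply mul_le_mul_of_nonneg_left _ hepos.le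
          rw [hsplit]; linarith
        calc E t ≤ Real.exp (-(a * (t - T))) *
              (Real.exp (a * (s - T)) * σbar + Real.exp (a * (t - T)) * (δ / 2)) := hEt
          _ = Real.exp (a * (s - t)) * σbar + δ / 2 := by
              rw [mul_add, ← mul_assoc, ← mul_assoc, ← Real.exp_add, ← Real.exp_add]
              ring_nf
              rw [Real.exp_zero]
              ring
      have hlim : Tendsto (fun t => Real.exp (a * (s - t)) * σbar + δ / 2)
          atTop (nhds (0 * σbar + δ / 2)) :=
        ((hexpc s).mul_const σbar).add tendsto_const_nhds
      rw [zero_mul, zero_add] at hlim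
      have hev : ∀ᶠ t in atTop, Real.exp (a * (s - t)) * σbar + δ / 2 < δ :=
        hlim.eventually_lt_const (by linarith)
      filter_upwards [hev, eventually_ge_atTop s] with t h1 h2
      exact lt_of_le_of_lt (hEb t h2) h1
  have hVub : ∀ t ≥ T, V t ≤ Real.exp (-(a * (t - T))) * V T + b * E t := by
    intro t ht
    have h1 := hkey t ht
    have h2 := mul_le_mul_of_nonneg_right h1 (Real.exp_pos (-(a * (t - T)))).le
    have h3 : V t * Real.exp (a * (t - T)) * Real.exp (-(a * (t - T))) = V t := by
      rw [mul_assoc, ← Real.exp_add]; simp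
    rw [h3] at h2
    calc V t ≤ (V T + b * F t) * Real.exp (-(a * (t - T))) := h2
      _ = Real.exp (-(a * (t - T))) * V T + b * E t := by rw [hEdef]; ring
  have hUlim : Tendsto (fun t => Real.exp (-(a * (t - T))) * V T + b * E t)
      atTop (nhds (0 * V T + b * 0)) := by
    apply Tendsto.add
    · apply Tendsto.mul_const
      have : (fun t : ℝ => Real.exp (-(a * (t - T)))) =
          fun t => Real.exp (a * (T - t)) := by
        funext t; ring_nf
      rw [this]
      exact hexpc T
    · exact hE0.const_mul b
  rw [zero_mul, mul_zero, zero_add] at hUlim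
  have goal3 : Tendsto V atTop (nhds 0) := by
    apply tendsto_of_tendsto_of_tendsto_of_le_of_le' tendsto_const_nhds hUlim
    · filter_upwards [eventually_ge_atTop T] with t ht
      exact hVnonneg t (le_trans hT.le ht)
    · filter_upwards [eventually_ge_atTop T] with t ht
      exact hVub t ht
  exact ⟨goal1, goal2, goal3⟩
end

section
/- Let ζ ∈ ℝ, σ > 0, g ≥ 0, τ ≥ 0, l ≥ g·τ, and let e ∈ ℝ satisfy |e| ≤ τ. Then g·ζ·e − l·ζ²/√(ζ² + σ²) ≤ l·σ. -/
/-- Key algebraic step in the proof of Proposition 1: for `σ > 0`, `g, τ ≥ 0`, `l ≥ g·τ`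
and `|e| ≤ τ`, the softening-sign damping dominates the cross term:
`g·ζ·e − l·ζ²/√(ζ² + σ²) ≤ l·σ`. -/
theorem softening_damping_dominates (ζ σ g τ l e : ℝ)
    (hσ : 0 < σ) (hg : 0 ≤ g) (hτ : 0 ≤ τ) (hl : g * τ ≤ l) (he : |e| ≤ τ) :
    g * ζ * e - l * ζ ^ 2 / Real.sqrt (ζ ^ 2 + σ ^ 2) ≤ l * σ := by
  set s := Real.sqrt (ζ ^ 2 + σ ^ 2) with hs
  have hs0 : 0 < s := Real.sqrt_pos.mpr (by positivity)
  have hs2 : s ^ 2 = ζ ^ 2 + σ ^ 2 := Real.sq_sqrt (by positivity)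
  have hl0 : 0 ≤ l := le_trans (by positivity) hl
  have hce : g * ζ * e ≤ l * |ζ| := by
    calc g * ζ * e ≤ |g * ζ * e| := le_abs_self _
    _ = g * |ζ| * |e| := by rw [abs_mul, abs_mul, abs_of_nonneg hg]
    _ ≤ g * |ζ| * τ := mul_le_mul_of_nonneg_left he (by positivity)
    _ = (g * τ) * |ζ| := by ring
    _ ≤ l * |ζ| := mul_le_mul_of_nonneg_right hl (abs_nonneg _)
  have hzs : |ζ| ≤ s := by
    rw [hs, ← Real.sqrt_sq_eq_abs]
    exact Real.sqrt_le_sqrt (by nlinarith [sq_nonneg σ])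
  have hd : (l * ζ ^ 2 / s) * s = l * ζ ^ 2 := div_mul_cancel₀ _ hs0.ne'
  have hsle : s ≤ |ζ| + σ := by
    nlinarith [hs2, abs_nonneg ζ, sq_abs ζ, sq_nonneg (s - |ζ| - σ), hs0]
  have hkey : l * |ζ| - l * ζ ^ 2 / s ≤ l * σ := by
    rw [sub_le_iff_le_add, ← sub_le_iff_le_add', le_div_iff₀ hs0]
    nlinarith [hd, mul_le_mul_of_nonneg_left hsle (mul_nonneg hl0 (abs_nonneg ζ)),
      mul_le_mul_of_nonneg_right hzs (mul_nonneg hl0 hσ.le), sq_abs ζ]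
  linarith
end

section
/- Let n ≥ 2 be an integer, let T > 0 and ε > 0, define μ̄ := 1 + T/ε and μ : [0,∞) → ℝ by μ(t) = (T+ε)/(T+ε−t) for 0 ≤ t < T and μ(t) = μ̄ for t ≥ T. Let k₁,…,kₙ > 0; for 1 ≤ i ≤ n−1 let gᵢ : [0,∞) → [0,∞) be continuous with gᵢ(t) ≤ ḡᵢ and let eᵢ : [0,∞) → ℝ be continuous with |eᵢ(t)| ≤ τᵢ for constants ḡᵢ, τᵢ ≥ 0; for 1 ≤ i ≤ n let σᵢ : [0,∞) → (0,∞) be continuous with ∫_0^∞ σᵢ(τ) dτ ≤ σ̄ᵢ < ∞; and let lᵢ ≥ ḡᵢτᵢ (with lₙ ≥ 0). Suppose ζ₁,…,ζₙ : [0,∞) → ℝ are continuously differentiable, ζᵢ(0) = 0, and satisfy: ζ̇₁ = −k₁μζ₁ + g₁e₁ + g₁ζ₂ − l₁ζ₁/√(ζ₁²+σ₁²); for 2 ≤ i ≤ n−1, ζ̇ᵢ = −kᵢμζᵢ + gᵢeᵢ + gᵢζ_{i+1} − g_{i−1}ζ_{i−1} − lᵢζᵢ/√(ζᵢ²+σᵢ²);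 and ζ̇ₙ = −kₙμζₙ − g_{n−1}ζ_{n−1} − lₙζₙ/√(ζₙ²+σₙ²). Then ζᵢ(t) → 0 as t → ∞ for every i = 1,…,n. -/
open Set Filter Finset MeasureTheory


lemma soften_ineq (z s : ℝ) (hs : 0 < s) :
    |z| - z ^ 2 / Real.sqrt (z ^ 2 + s ^ 2) ≤ s := by
  set r := Real.sqrt (z ^ 2 + s ^ 2) with hr
  have hrpos : 0 < r := Real.sqrt_pos.2 (by positivity)
  have hzr : |z| ≤ r := by
    rw [hr, ← Real.sqrt_sq_eq_abs]
    exact Real.sqrt_le_sqrt (by nlinarith [sq_nonneg s])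
  have hrle : r ≤ |z| + s := by
    rw [hr]
    have : z ^ 2 + s ^ 2 ≤ (|z| + s) ^ 2 := by
      have := abs_nonneg z
      nlinarith [sq_abs z]
    calc Real.sqrt (z ^ 2 + s ^ 2) ≤ Real.sqrt ((|z| + s) ^ 2) := Real.sqrt_le_sqrt this
      _ = |z| + s := Real.sqrt_sq (by positivity)
  have key : |z| * r ≤ z ^ 2 + s * r := by
    have h1 : |z| * r ≤ |z| * (|z| + s) := mul_le_mul_of_nonneg_left hrle (abs_nonneg z)
    have h2 : |z| * (|z| + s) = z ^ 2 + s * |z| := by rw [← sq_abs z]; ring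
    have h3 : s * |z| ≤ s * r := mul_le_mul_of_nonneg_left hzr hs.le
    linarith
  have : |z| ≤ z ^ 2 / r + s := by
    rw [div_add' _ _ _ (ne_of_gt hrpos), le_div_iff₀ hrpos]
    linarith
  linarith


lemma gronwall_aux (V S : ℝ → ℝ) (κ : ℝ) (hκ : 0 < κ)
    (hScont : ContinuousOn S (Set.Ici 0)) (hSnn : ∀ t ≥ (0:ℝ), 0 ≤ S t)
    (hSint : MeasureTheory.IntegrableOn S (Set.Ici (0:ℝ)))
    (hV0 : V 0 = 0) (hVnn : ∀ t ≥ (0:ℝ), 0 ≤ V t)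
    (hVD : ∀ t ≥ (0:ℝ), ∃ V', HasDerivWithinAt V V' (Set.Ici 0) t ∧
      V' ≤ -(2 * κ) * V t + S t) :
    Tendsto V atTop (nhds 0) := by
  set h : ℝ → ℝ := fun τ => S τ * Real.exp (2 * κ * τ) with hh
  have hhcont : ContinuousOn h (Set.Ici 0) :=
    hScont.mul (Real.continuous_exp.comp (continuous_const.mul continuous_id)).continuousOn
  have hhnn : ∀ τ ≥ (0:ℝ), 0 ≤ h τ := fun τ hτ =>
    mul_nonneg (hSnn τ hτ) (Real.exp_pos _).le
  have hsub : ∀ a b : ℝ, 0 ≤ a → 0 ≤ b → Set.uIcc a b ⊆ Set.Ici 0 := by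
    intro a b ha hb x hx
    rcases Set.mem_uIcc.mp hx with h' | h'
    · exact Set.mem_Ici.2 (le_trans ha h'.1)
    · exact Set.mem_Ici.2 (le_trans hb h'.1)
  have hint : ∀ a b : ℝ, 0 ≤ a → 0 ≤ b → IntervalIntegrable h volume a b := fun a b ha hb =>
    (hhcont.mono (hsub a b ha hb)).intervalIntegrable
  have hSci : ∀ a b : ℝ, 0 ≤ a → 0 ≤ b → IntervalIntegrable S volume a b := fun a b ha hb =>
    (hScont.mono (hsub a b ha hb)).intervalIntegrable
  set F : ℝ → ℝ := fun t => ∫ τ in (0:ℝ)..t, h τ with hF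
  set E : ℝ → ℝ := fun t => Real.exp (2 * κ * t) with hE
  set G : ℝ → ℝ := fun t => V t * E t - F t with hG
  have hFnn : ∀ t ≥ (0:ℝ), 0 ≤ F t := by
    intro t ht
    exact intervalIntegral.integral_nonneg ht (fun τ hτ => hhnn τ hτ.1)
  have hFD : ∀ t > (0:ℝ), HasDerivAt F (h t) t := by
    intro t ht
    exact intervalIntegral.integral_hasDerivAt_right (hint 0 t le_rfl ht.le)
      (ContinuousOn.stronglyMeasurableAtFilter isOpen_Ioi
        (hhcont.mono Set.Ioi_subset_Ici_self) t ht)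
      ((hhcont t ht.le).continuousAt (mem_of_superset (Ioi_mem_nhds ht) Set.Ioi_subset_Ici_self))
  have hF0 : HasDerivWithinAt F (h 0) (Set.Ici 0) 0 := by
    exact intervalIntegral.integral_hasDerivWithinAt_right (hint 0 0 le_rfl le_rfl)
      ⟨Set.Ici 0, mem_of_superset self_mem_nhdsWithin Set.Ioi_subset_Ici_self,
        hhcont.aestronglyMeasurable measurableSet_Ici⟩
      ((hhcont 0 Set.self_mem_Ici).mono Set.Ioi_subset_Ici_self)
  have hFcont : ContinuousOn F (Set.Ici 0) := by
    intro t ht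
    rcases eq_or_lt_of_le (Set.mem_Ici.mp ht : (0:ℝ) ≤ t) with h' | h'
    · rw [← h']; exact hF0.continuousWithinAt
    · exact (hFD t h').continuousAt.continuousWithinAt
  have hVcont : ContinuousOn V (Set.Ici 0) := fun t ht =>
    ((hVD t ht).choose_spec.1).continuousWithinAt
  have hEcont : Continuous E := Real.continuous_exp.comp (continuous_const.mul continuous_id)
  have hGcont : ContinuousOn G (Set.Ici 0) :=
    (hVcont.mul hEcont.continuousOn).sub hFcont
  have hGD : ∀ x ∈ interior (Set.Ici (0:ℝ)), ∃ G', HasDerivAt G G' x ∧ G' ≤ 0 := by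
    rw [interior_Ici]
    intro x hx
    obtain ⟨V', hDV, hbV⟩ := hVD x (le_of_lt hx)
    have hVx : HasDerivAt V V' x := hDV.hasDerivAt (Ici_mem_nhds hx)
    have hEx : HasDerivAt E (Real.exp (2 * κ * x) * (2 * κ)) x := by
      have := ((hasDerivAt_id x).const_mul (2 * κ)).exp
      simp only [hE]
      simpa using this
    have hGx : HasDerivAt G (V' * E x + V x * (Real.exp (2 * κ * x) * (2 * κ)) - h x) x :=
      (hVx.mul hEx).sub (hFD x hx)
    refine ⟨_, hGx, ?_⟩
    have hEpos : 0 < E x := Real.exp_pos _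
    have : V' + 2 * κ * V x - S x ≤ 0 := by linarith
    have hEeq : Real.exp (2 * κ * x) = E x := rfl
    rw [hh]
    simp only [hEeq]
    nlinarith
  have hanti : AntitoneOn G (Set.Ici 0) := by
    apply antitoneOn_of_deriv_nonpos (convex_Ici 0) hGcont
    · intro x hx
      obtain ⟨G', hGx, _⟩ := hGD x (by rwa [interior_Ici] at hx ⊢)
      exact hGx.differentiableAt.differentiableWithinAt
    · intro x hx
      obtain ⟨G', hGx, hle⟩ := hGD x hx
      rwa [hGx.deriv]
  have hG0 : G 0 = 0 := by
    simp [hG, hF, hV0, intervalIntegral.integral_same]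
  have hVle : ∀ t ≥ (0:ℝ), V t ≤ F t * Real.exp (-(2 * κ * t)) := by
    intro t ht
    have hGt : G t ≤ 0 := hG0 ▸ hanti (Set.mem_Ici.2 le_rfl) (Set.mem_Ici.2 ht) ht
    have hEpos : 0 < E t := Real.exp_pos _
    have h1 : V t * E t ≤ F t := by simpa [hG] using hGt
    rw [Real.exp_neg]
    rw [ge_iff_le, ← le_div_iff₀ hEpos] at *
    · exact h1.trans_eq (div_eq_mul_inv _ _)
  -- tail estimate
  have hSIoi : MeasureTheory.IntegrableOn S (Set.Ioi (0:ℝ)) :=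
    hSint.mono_set Set.Ioi_subset_Ici_self
  set T0 : ℝ := ∫ τ in Set.Ioi (0:ℝ), S τ with hT0
  have htend : Tendsto (fun A => ∫ τ in (0:ℝ)..A, S τ) atTop (nhds T0) :=
    MeasureTheory.intervalIntegral_tendsto_integral_Ioi 0 hSIoi tendsto_id
  have hsplit : ∀ A : ℝ, 0 ≤ A →
      (∫ τ in Set.Ioi A, S τ) = T0 - ∫ τ in (0:ℝ)..A, S τ := by
    intro A hA
    have hdisj : Disjoint (Set.Ioc 0 A) (Set.Ioi A) := by
      apply Set.disjoint_left.2
      intro x hx1 hx2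
      exact absurd hx1.2 (not_le.2 hx2)
    have hun : Set.Ioc 0 A ∪ Set.Ioi A = Set.Ioi (0:ℝ) := Set.Ioc_union_Ioi_eq_Ioi hA
    have := MeasureTheory.setIntegral_union hdisj measurableSet_Ioi
      (hSIoi.mono_set (hun ▸ Set.subset_union_left))
      (hSIoi.mono_set (hun ▸ Set.subset_union_right))
    rw [hun] at this
    rw [intervalIntegral.integral_of_le hA, hT0, this]
    ring
  have htail : ∀ δ > (0:ℝ), ∃ A ≥ (0:ℝ), (∫ τ in Set.Ioi A, S τ) < δ := by
    intro δ hδ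
    have h1 : ∀ᶠ A in atTop, T0 - δ < ∫ τ in (0:ℝ)..A, S τ :=
      htend (Ioi_mem_nhds (by linarith))
    obtain ⟨A, hA1, hA2⟩ := (h1.and (eventually_ge_atTop (0:ℝ))).exists
    exact ⟨A, hA2, by rw [hsplit A hA2]; linarith⟩
  -- limit of the bound
  have hbound : Tendsto (fun t => F t * Real.exp (-(2 * κ * t))) atTop (nhds 0) := by
    rw [NormedAddCommGroup.tendsto_nhds_zero]
    intro δ hδ
    obtain ⟨A, hA0, hAtail⟩ := htail (δ / 2) (by linarith)
    have hkey : ∀ t : ℝ, A ≤ t → F t ≤ F A + Real.exp (2 * κ * t) * (δ / 2) := by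
      intro t hAt
      have ht0 : (0:ℝ) ≤ t := le_trans hA0 hAt
      have hadd : F A + (∫ τ in A..t, h τ) = F t :=
        intervalIntegral.integral_add_adjacent_intervals (hint 0 A le_rfl hA0)
          (hint A t hA0 ht0)
      have hmono : (∫ τ in A..t, h τ) ≤ ∫ τ in A..t, S τ * Real.exp (2 * κ * t) := by
        apply intervalIntegral.integral_mono_on hAt (hint A t hA0 ht0)
          ((hSci A t hA0 ht0).mul_const _)
        intro τ hτ
        have hτ0 : (0:ℝ) ≤ τ := le_trans hA0 hτ.1
        exact mul_le_mul_of_nonneg_left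
          (Real.exp_le_exp.2 (by nlinarith [hτ.2])) (hSnn τ hτ0)
      have hconst : (∫ τ in A..t, S τ * Real.exp (2 * κ * t))
          = (∫ τ in A..t, S τ) * Real.exp (2 * κ * t) :=
        intervalIntegral.integral_mul_const _ _
      have hS2 : (∫ τ in A..t, S τ) ≤ ∫ τ in Set.Ioi A, S τ := by
        rw [intervalIntegral.integral_of_le hAt]
        apply MeasureTheory.setIntegral_mono_set (hSIoi.mono_set ?_) ?_ ?_
        · intro x hx; exact lt_of_le_of_lt hA0 hx
        · refine (MeasureTheory.ae_restrict_iff' measurableSet_Ioi).2 (ae_of_all _ ?_)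
          intro x hx; exact hSnn x (le_trans hA0 (le_of_lt hx))
        · exact HasSubset.Subset.eventuallyLE Set.Ioc_subset_Ioi_self
      have hexp : (0:ℝ) < Real.exp (2 * κ * t) := Real.exp_pos _
      nlinarith [hadd, hmono, hconst, hS2, hAtail]
    have h2 : Tendsto (fun t : ℝ => Real.exp (-(2 * κ * t))) atTop (nhds 0) := by
      apply Real.tendsto_exp_atBot.comp
      have : Tendsto (fun t : ℝ => 2 * κ * t) atTop atTop :=
        Tendsto.const_mul_atTop (by linarith) tendsto_id
      exact tendsto_neg_atBot_iff.2 this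
    have h3 : Tendsto (fun t : ℝ => F A * Real.exp (-(2 * κ * t))) atTop (nhds 0) := by
      simpa using h2.const_mul (F A)
    have h4 : ∀ᶠ t in atTop, ‖F A * Real.exp (-(2 * κ * t))‖ < δ / 2 :=
      (NormedAddCommGroup.tendsto_nhds_zero.1 h3) (δ / 2) (by linarith)
    filter_upwards [h4, eventually_ge_atTop A, eventually_ge_atTop (0:ℝ)] with t h4t hAt h0t
    have hFt0 : 0 ≤ F t := hFnn t h0t
    have hexp0 : (0:ℝ) < Real.exp (-(2 * κ * t)) := Real.exp_pos _
    have hEE : Real.exp (2 * κ * t) * Real.exp (-(2 * κ * t)) = 1 := by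
      rw [← Real.exp_add]; simp
    have hle : F t * Real.exp (-(2 * κ * t))
        ≤ F A * Real.exp (-(2 * κ * t)) + δ / 2 := by
      have := hkey t hAt
      nlinarith
    have habs : F A * Real.exp (-(2 * κ * t)) ≤ ‖F A * Real.exp (-(2 * κ * t))‖ :=
      le_abs_self _
    rw [Real.norm_eq_abs, abs_of_nonneg (mul_nonneg hFt0 hexp0.le)]
    calc F t * Real.exp (-(2 * κ * t)) ≤ F A * Real.exp (-(2 * κ * t)) + δ / 2 := hle
      _ ≤ ‖F A * Real.exp (-(2 * κ * t))‖ + δ / 2 := by linarith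
      _ < δ / 2 + δ / 2 := by linarith
      _ = δ := by ring
  -- squeeze
  apply squeeze_zero' ?_ ?_ hbound
  · filter_upwards [eventually_ge_atTop (0:ℝ)] with t ht using hVnn t ht
  · filter_upwards [eventually_ge_atTop (0:ℝ)] with t ht using hVle t ht

/-- Proposition 1: the time-varying error compensator driven by bounded filter errors
`eᵢ` (with `|eᵢ| ≤ τᵢ`), with softening-sign damping gains `lᵢ ≥ ḡᵢτᵢ` and positive
integrable softening functions `σᵢ`, produces compensation signals `ζᵢ` converging to
zero as `t → ∞`. -/
theorem proposition1
    (n : ℕ) (hn : 2 ≤ n) (T ε : ℝ) (hT : 0 < T) (hε : 0 < ε)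
    (μ : ℝ → ℝ)
    (hμ1 : ∀ t : ℝ, 0 ≤ t → t < T → μ t = (T + ε) / (T + ε - t))
    (hμ2 : ∀ t : ℝ, T ≤ t → μ t = 1 + T / ε)
    (k : ℕ → ℝ) (hk : ∀ i ∈ Finset.Icc 1 n, 0 < k i)
    (g e : ℕ → ℝ → ℝ) (gbar τ : ℕ → ℝ)
    (hgbar : ∀ i ∈ Finset.Icc 1 (n - 1), 0 ≤ gbar i)
    (hτ : ∀ i ∈ Finset.Icc 1 (n - 1), 0 ≤ τ i)
    (hgcont : ∀ i ∈ Finset.Icc 1 (n - 1), ContinuousOn (g i) (Set.Ici (0:ℝ)))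
    (hgnonneg : ∀ i ∈ Finset.Icc 1 (n - 1), ∀ t ≥ (0:ℝ), 0 ≤ g i t)
    (hgbdd : ∀ i ∈ Finset.Icc 1 (n - 1), ∀ t ≥ (0:ℝ), g i t ≤ gbar i)
    (hecont : ∀ i ∈ Finset.Icc 1 (n - 1), ContinuousOn (e i) (Set.Ici (0:ℝ)))
    (hebdd : ∀ i ∈ Finset.Icc 1 (n - 1), ∀ t ≥ (0:ℝ), |e i t| ≤ τ i)
    (σ : ℕ → ℝ → ℝ) (σbar : ℕ → ℝ)
    (hσcont : ∀ i ∈ Finset.Icc 1 n, ContinuousOn (σ i) (Set.Ici (0:ℝ)))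
    (hσpos : ∀ i ∈ Finset.Icc 1 n, ∀ t ≥ (0:ℝ), 0 < σ i t)
    (hσint : ∀ i ∈ Finset.Icc 1 n, MeasureTheory.IntegrableOn (σ i) (Set.Ici (0:ℝ)) ∧
      ∫ t in Set.Ici (0:ℝ), σ i t ≤ σbar i)
    (l : ℕ → ℝ)
    (hl : ∀ i ∈ Finset.Icc 1 (n - 1), gbar i * τ i ≤ l i) (hln : 0 ≤ l n)
    (ζ : ℕ → ℝ → ℝ)
    (hζ0 : ∀ i ∈ Finset.Icc 1 n, ζ i 0 = 0)
    (hζ1 : ∀ t ≥ (0:ℝ), HasDerivWithinAt (ζ 1)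
      (-k 1 * μ t * ζ 1 t + g 1 t * e 1 t + g 1 t * ζ 2 t
        - l 1 * ζ 1 t / Real.sqrt ((ζ 1 t) ^ 2 + (σ 1 t) ^ 2)) (Set.Ici (0:ℝ)) t)
    (hζmid : ∀ i ∈ Finset.Icc 2 (n - 1), ∀ t ≥ (0:ℝ), HasDerivWithinAt (ζ i)
      (-k i * μ t * ζ i t + g i t * e i t + g i t * ζ (i + 1) t
        - g (i - 1) t * ζ (i - 1) t
        - l i * ζ i t / Real.sqrt ((ζ i t) ^ 2 + (σ i t) ^ 2)) (Set.Ici (0:ℝ)) t)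
    (hζn : ∀ t ≥ (0:ℝ), HasDerivWithinAt (ζ n)
      (-k n * μ t * ζ n t - g (n - 1) t * ζ (n - 1) t
        - l n * ζ n t / Real.sqrt ((ζ n t) ^ 2 + (σ n t) ^ 2)) (Set.Ici (0:ℝ)) t) :
    ∀ i ∈ Finset.Icc 1 n, Tendsto (ζ i) atTop (nhds 0) := by
  have hne : (Finset.Icc 1 n).Nonempty := ⟨1, Finset.mem_Icc.2 ⟨le_rfl, by omega⟩⟩
  set κ := (Finset.Icc 1 n).inf' hne k with hκdef
  have hκpos : 0 < κ := (Finset.lt_inf'_iff hne).2 hk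
  have hκle : ∀ i ∈ Finset.Icc 1 n, κ ≤ k i := fun i hi => Finset.inf'_le k hi
  have hμge : ∀ t : ℝ, 0 ≤ t → 1 ≤ μ t := by
    intro t ht
    rcases lt_or_ge t T with h | h
    · rw [hμ1 t ht h]
      have hden : 0 < T + ε - t := by linarith
      rw [le_div_iff₀ hden]; linarith
    · rw [hμ2 t h]
      have : 0 ≤ T / ε := div_nonneg hT.le hε.le
      linarith
  have hlnn : ∀ i ∈ Finset.Icc 1 n, 0 ≤ l i := by
    intro i hi
    rw [Finset.mem_Icc] at hi
    rcases eq_or_lt_of_le hi.2 with h | h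
    · exact h ▸ hln
    · have hi' : i ∈ Finset.Icc 1 (n - 1) := Finset.mem_Icc.2 ⟨hi.1, by omega⟩
      exact le_trans (mul_nonneg (hgbar i hi') (hτ i hi')) (hl i hi')
  set D : ℕ → ℝ → ℝ := fun i t =>
    -k i * μ t * ζ i t + (if i < n then g i t * e i t + g i t * ζ (i + 1) t else 0)
      - (if 2 ≤ i then g (i - 1) t * ζ (i - 1) t else 0)
      - l i * ζ i t / Real.sqrt ((ζ i t) ^ 2 + (σ i t) ^ 2) with hD
  have hDeriv : ∀ i ∈ Finset.Icc 1 n, ∀ t ≥ (0:ℝ),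
      HasDerivWithinAt (ζ i) (D i t) (Set.Ici 0) t := by
    intro i hi t ht
    rw [Finset.mem_Icc] at hi
    rcases eq_or_lt_of_le hi.1 with h1 | h1
    · have hi1 : i = 1 := h1.symm
      subst hi1
      have h1n : (1:ℕ) < n := by omega
      have h21 : ¬ (2 ≤ 1) := by omega
      have h := hζ1 t ht
      simp only [hD, if_pos h1n, if_neg h21]
      convert h using 1
      ring
    rcases eq_or_lt_of_le hi.2 with h2 | h2
    · subst h2
      have hnn : ¬ (i < i) := lt_irrefl i
      have h2i : 2 ≤ i := h1
      have h := hζn t ht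
      simp only [hD, if_neg hnn, if_pos h2i]
      convert h using 1
      ring
    · have hmem : i ∈ Finset.Icc 2 (n - 1) := Finset.mem_Icc.2 ⟨h1, by omega⟩
      have h := hζmid i hmem t ht
      have h2i : 2 ≤ i := h1
      simp only [hD, if_pos h2, if_pos h2i]
      convert h using 1
      ring
  set V : ℝ → ℝ := fun t => ∑ i ∈ Finset.Icc 1 n, ζ i t ^ 2 with hV
  set S : ℝ → ℝ := fun t => ∑ i ∈ Finset.Icc 1 n, 2 * l i * σ i t with hS
  have hScont : ContinuousOn S (Set.Ici 0) := by
    apply continuousOn_finset_sum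
    intro i hi
    exact continuousOn_const.mul (hσcont i hi)
  have hSnn : ∀ t ≥ (0:ℝ), 0 ≤ S t := by
    intro t ht
    apply Finset.sum_nonneg
    intro i hi
    exact mul_nonneg (by linarith [hlnn i hi]) (hσpos i hi t ht).le
  have hSint : MeasureTheory.IntegrableOn S (Set.Ici (0:ℝ)) := by
    apply MeasureTheory.integrable_finset_sum
    intro i hi
    exact ((hσint i hi).1.const_mul (2 * l i))
  have hV0 : V 0 = 0 := by
    simp only [hV]
    apply Finset.sum_eq_zero
    intro i hi
    rw [hζ0 i hi]; ring
  have hVnn : ∀ t ≥ (0:ℝ), 0 ≤ V t := fun t _ =>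
    Finset.sum_nonneg fun i _ => sq_nonneg _
  have hVD : ∀ t ≥ (0:ℝ), ∃ V', HasDerivWithinAt V V' (Set.Ici 0) t ∧
      V' ≤ -(2 * κ) * V t + S t := by
    intro t ht
    refine ⟨∑ i ∈ Finset.Icc 1 n, 2 * ζ i t * D i t, ?_, ?_⟩
    · have h : HasDerivWithinAt (fun y => ∑ i ∈ Finset.Icc 1 n, ζ i y ^ 2)
          (∑ i ∈ Finset.Icc 1 n, ((2:ℕ):ℝ) * ζ i t ^ (2 - 1) * D i t) (Set.Ici 0) t :=
        HasDerivWithinAt.fun_sum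
        (fun i hi => (hDeriv i hi t ht).fun_pow 2)
      convert h using 1
      apply Finset.sum_congr rfl
      intro i _
      push_cast
      ring
    · -- the key Lyapunov inequality
      have hsplitterm : ∀ i ∈ Finset.Icc 1 n, 2 * ζ i t * D i t =
          (-(2 * (k i * μ t) * ζ i t ^ 2))
          + ((if i < n then 2 * (ζ i t * (g i t * e i t)) else 0)
             - 2 * l i * (ζ i t ^ 2 / Real.sqrt ((ζ i t) ^ 2 + (σ i t) ^ 2)))
          + ((if i < n then 2 * (g i t * ζ i t * ζ (i + 1) t) else 0)
             - (if 2 ≤ i then 2 * (g (i - 1) t * ζ (i - 1) t * ζ i t) else 0)) := by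
        intro i _
        simp only [hD]
        split_ifs with h h' <;> ring
      rw [Finset.sum_congr rfl hsplitterm, Finset.sum_add_distrib, Finset.sum_add_distrib,
        Finset.sum_sub_distrib, Finset.sum_sub_distrib]
      have hC : (∑ i ∈ Finset.Icc 1 n,
            (if i < n then 2 * (g i t * ζ i t * ζ (i + 1) t) else 0))
          = ∑ i ∈ Finset.Icc 1 n,
            (if 2 ≤ i then 2 * (g (i - 1) t * ζ (i - 1) t * ζ i t) else 0) := by
        rw [← Finset.sum_filter, ← Finset.sum_filter]
        have e1 : (Finset.Icc 1 n).filter (· < n) = Finset.Icc 1 (n - 1) := by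
          ext x
          simp only [Finset.mem_filter, Finset.mem_Icc]
          omega
        have e2 : (Finset.Icc 1 n).filter (fun i => 2 ≤ i) = Finset.Icc 2 n := by
          ext x
          simp only [Finset.mem_filter, Finset.mem_Icc]
          omega
        rw [e1, e2]
        have e3 : Finset.Icc 2 n = (Finset.Icc 1 (n - 1)).map (addRightEmbedding 1) := by
          rw [Finset.map_add_right_Icc]
          congr 1
          omega
        rw [e3, Finset.sum_map]
        apply Finset.sum_congr rfl
        intro i _
        simp [addRightEmbedding]
      have hA : (∑ i ∈ Finset.Icc 1 n, (-(2 * (k i * μ t) * ζ i t ^ 2)))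
          ≤ -(2 * κ) * V t := by
        have hterm : ∀ i ∈ Finset.Icc 1 n,
            -(2 * (k i * μ t) * ζ i t ^ 2) ≤ -(2 * κ) * ζ i t ^ 2 := by
          intro i hi
          have h1 : κ ≤ k i * μ t := by
            calc κ ≤ k i := hκle i hi
              _ ≤ k i * μ t := le_mul_of_one_le_right (hk i hi).le (hμge t ht)
          nlinarith [sq_nonneg (ζ i t)]
        calc (∑ i ∈ Finset.Icc 1 n, (-(2 * (k i * μ t) * ζ i t ^ 2)))
            ≤ ∑ i ∈ Finset.Icc 1 n, (-(2 * κ) * ζ i t ^ 2) := Finset.sum_le_sum hterm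
          _ = -(2 * κ) * V t := by rw [hV, Finset.mul_sum]
      have hB : (∑ i ∈ Finset.Icc 1 n,
            ((if i < n then 2 * (ζ i t * (g i t * e i t)) else 0)))
          - (∑ i ∈ Finset.Icc 1 n,
            2 * l i * (ζ i t ^ 2 / Real.sqrt ((ζ i t) ^ 2 + (σ i t) ^ 2)))
          ≤ S t := by
        rw [← Finset.sum_sub_distrib]
        have hper : ∀ i ∈ Finset.Icc 1 n,
            (if i < n then 2 * (ζ i t * (g i t * e i t)) else 0)
              - 2 * l i * (ζ i t ^ 2 / Real.sqrt ((ζ i t) ^ 2 + (σ i t) ^ 2))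
            ≤ 2 * l i * σ i t := by
          intro i hi
          have hiI := hi
          rw [Finset.mem_Icc] at hi
          have hσi : 0 < σ i t := hσpos i hiI t ht
          have hli : 0 ≤ l i := hlnn i hiI
          have hLnn : 0 ≤ 2 * l i * (ζ i t ^ 2 / Real.sqrt ((ζ i t) ^ 2 + (σ i t) ^ 2)) :=
            mul_nonneg (by linarith) (div_nonneg (sq_nonneg _) (Real.sqrt_nonneg _))
          rcases lt_or_eq_of_le hi.2 with hin | hin
          · have hi' : i ∈ Finset.Icc 1 (n - 1) := Finset.mem_Icc.2 ⟨hi.1, by omega⟩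
            rw [if_pos hin]
            have hz := soften_ineq (ζ i t) (σ i t) hσi
            have hBle : 2 * (ζ i t * (g i t * e i t)) ≤ 2 * l i * |ζ i t| := by
              have h1 : ζ i t * (g i t * e i t) ≤ |ζ i t * (g i t * e i t)| := le_abs_self _
              have h2 : |ζ i t * (g i t * e i t)| = |ζ i t| * (g i t * |e i t|) := by
                rw [abs_mul, abs_mul, abs_of_nonneg (hgnonneg i hi' t ht)]
              have h3 : g i t * |e i t| ≤ gbar i * τ i :=
                mul_le_mul (hgbdd i hi' t ht) (hebdd i hi' t ht) (abs_nonneg _) (hgbar i hi')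
              have h4 : gbar i * τ i ≤ l i := hl i hi'
              nlinarith [abs_nonneg (ζ i t)]
            have h5 : 2 * l i * (|ζ i t| - ζ i t ^ 2 / Real.sqrt ((ζ i t) ^ 2 + (σ i t) ^ 2))
                ≤ 2 * l i * σ i t := mul_le_mul_of_nonneg_left hz (by linarith)
            nlinarith
          · rw [if_neg (by omega : ¬ i < n)]
            have : 0 ≤ 2 * l i * σ i t := mul_nonneg (by linarith) hσi.le
            linarith
        calc (∑ i ∈ Finset.Icc 1 n,
              ((if i < n then 2 * (ζ i t * (g i t * e i t)) else 0)
                - 2 * l i * (ζ i t ^ 2 / Real.sqrt ((ζ i t) ^ 2 + (σ i t) ^ 2))))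
            ≤ ∑ i ∈ Finset.Icc 1 n, 2 * l i * σ i t := Finset.sum_le_sum hper
          _ = S t := rfl
      linarith [hA, hB, hC]
  have hVtend : Tendsto V atTop (nhds 0) :=
    gronwall_aux V S κ hκpos hScont hSnn hSint hV0 hVnn hVD
  intro i hi
  have hsq : Tendsto (fun t => Real.sqrt (V t)) atTop (nhds 0) := by
    simpa using hVtend.sqrt
  rw [tendsto_zero_iff_abs_tendsto_zero]
  apply squeeze_zero' ?_ ?_ hsq
  · filter_upwards with t using abs_nonneg _
  · filter_upwards [eventually_ge_atTop (0:ℝ)] with t ht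
    have h1 : ζ i t ^ 2 ≤ V t :=
      Finset.single_le_sum (f := fun j => ζ j t ^ 2) (fun j _ => sq_nonneg _) hi
    calc |ζ i t| = Real.sqrt (ζ i t ^ 2) := (Real.sqrt_sq_eq_abs _).symm
      _ ≤ Real.sqrt (V t) := Real.sqrt_le_sqrt h1
end

section
/- Fix an integer n ≥ 2, T > 0 and ε > 0 with ε < T, and define μ̄ := 1 + T/ε and μ : [0,∞) → ℝ by μ(t) = (T+ε)/(T+ε−t) for 0 ≤ t < T and μ(t) = μ̄ for t ≥ T. Let x_d : [0,∞) → ℝ be continuously differentiable with x_d and ẋ_d bounded. Let k₁,…,kₙ > 0, δ₁,…,δ_{n−1} > 0, and let σ₁,…,σₙ : [0,∞) → (0,∞) be continuous with ∫_0^∞ σᵢ ≤ σ̄ᵢ < ∞. Suppose x₁,…,xₙ, u, α₁,…,αₙ₋₁, α̂₁,…,α̂_{n−1}, ζ₁,…,ζₙ : [0,∞) → ℝ are continuously differentiable functions, and f₁,…,fₙ, g₁,…,gₙ : [0,∞) → ℝ are continuous and bounded with gᵢ(t) ≥ g₀ > 0, such that for all t ≥ 0: (plant) ẋᵢ = gᵢ·x_{i+1}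 + fᵢ for i = 1,…,n−1 and ẋₙ = gₙ·u + fₙ; (filters) δᵢ·α̂̇ᵢ = μ·(αᵢ − α̂ᵢ) with α̂ᵢ(0) = αᵢ(0) and |α̂ᵢ(t) − αᵢ(t)| ≤ τᵢ for constants τᵢ and lᵢ ≥ (sup_t gᵢ(t))·τᵢ; (coordinates) z₁ = x₁ − x_d, zᵢ = xᵢ − α̂_{i−1} for i ≥ 2, sᵢ = zᵢ − ζᵢ; (compensator) ζᵢ(0) = 0, ζ̇₁ = −k₁μζ₁ + g₁(α̂₁−α₁) + g₁ζ₂ − l₁ζ₁/√(ζ₁²+σ₁²), ζ̇ᵢ = −kᵢμζᵢ + gᵢ(α̂ᵢ−αᵢ) + gᵢζ_{i+1} − g_{i−1}ζ_{i−1} − lᵢζᵢ/√(ζᵢ²+σᵢ²) for 2 ≤ i ≤ n−1, ζ̇ₙ = −kₙμζₙ − g_{n−1}ζ_{n−1} − lₙζₙ/√(ζₙ²+σₙ²); (controller) α₁ = (1/g₁)(−k₁μz₁ + ẋ_d − f₁ − l₁ζ₁/√(ζ₁²+σ₁²) − s₁/√(s₁²+σ₁²)), αᵢ = (1/gᵢ)(−kᵢμzᵢ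 + α̂̇_{i−1} − fᵢ − g_{i−1}z_{i−1} − lᵢζᵢ/√(ζᵢ²+σᵢ²) − sᵢ/√(sᵢ²+σᵢ²)) for 2 ≤ i ≤ n−1, and u = (1/gₙ)(−kₙμzₙ + α̂̇_{n−1} − fₙ − g_{n−1}z_{n−1} − lₙζₙ/√(ζₙ²+σₙ²) − sₙ/√(sₙ²+σₙ²)). Then, with K₁ = 2·min{k₁,…,kₙ}: (i) the function V_n = (1/2)Σsᵢ² is bounded on [0,∞) and satisfies V_n(T) ≤ V_n(0)·(ε/(T+ε))^{K₁(T+ε)}; (ii) sᵢ(t) → 0 and ζᵢ(t) → 0 as t → ∞ for every i; and hence (iii) the tracking error z₁(t) = x₁(t) − x_d(t) is bounded and z₁(t) → 0 as t → ∞. -/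
open Set Filter Finset MeasureTheory



lemma aux_antitoneOn (F F' : ℝ → ℝ)
    (hF : ∀ t ∈ Ici (0:ℝ), HasDerivWithinAt F (F' t) (Ici 0) t)
    (hF' : ∀ t ∈ Ici (0:ℝ), F' t ≤ 0) : AntitoneOn F (Ici 0) := by
  apply antitoneOn_of_deriv_nonpos (convex_Ici 0)
    (fun t ht => (hF t ht).continuousWithinAt)
  · intro t ht
    rw [interior_Ici] at ht
    exact (((hF t (mem_Ici.mpr (le_of_lt (mem_Ioi.mp ht)))).hasDerivAt (Ici_mem_nhds (mem_Ioi.mp ht))).differentiableAt).differentiableWithinAt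
  · intro t ht
    rw [interior_Ici] at ht
    rw [((hF t (mem_Ici.mpr (le_of_lt (mem_Ioi.mp ht)))).hasDerivAt (Ici_mem_nhds (mem_Ioi.mp ht))).deriv]
    exact hF' t (mem_Ici.mpr (le_of_lt (mem_Ioi.mp ht)))

lemma aux_soft (c σ l : ℝ) (hσ : 0 < σ) (hl : 0 ≤ l) :
    l * |c| - l * c ^ 2 / Real.sqrt (c ^ 2 + σ ^ 2) ≤ l * σ := by
  have hr : 0 < Real.sqrt (c ^ 2 + σ ^ 2) := Real.sqrt_pos.2 (by positivity)
  have hle : Real.sqrt (c ^ 2 + σ ^ 2) ≤ |c| + σ := by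
    rw [show |c| + σ = Real.sqrt ((|c| + σ) ^ 2) from (Real.sqrt_sq (by positivity)).symm]
    apply Real.sqrt_le_sqrt
    nlinarith [abs_nonneg c, sq_abs c]
  have h2 : c ^ 2 / (|c| + σ) ≤ c ^ 2 / Real.sqrt (c ^ 2 + σ ^ 2) :=
    div_le_div_of_nonneg_left (by positivity) hr hle
  have h3 : |c| - σ ≤ c ^ 2 / (|c| + σ) := by
    rw [le_div_iff₀ (by positivity)]
    nlinarith [sq_abs c]
  have h4 : |c| - c ^ 2 / Real.sqrt (c ^ 2 + σ ^ 2) ≤ σ := by linarith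
  have := mul_le_mul_of_nonneg_left h4 hl
  rw [mul_div_assoc]
  linarith [this]

lemma aux_reindex (n : ℕ) (B : ℕ → ℝ) (hn : 2 ≤ n) :
    ∑ i ∈ Finset.Icc 2 n, B i = ∑ i ∈ Finset.Icc 1 (n - 1), B (i + 1) := by
  apply Finset.sum_nbij' (fun i => i - 1) (fun j => j + 1)
  · intro a ha; rw [Finset.mem_Icc] at *; omega
  · intro a ha; rw [Finset.mem_Icc] at *; omega
  · intro a ha; rw [Finset.mem_Icc] at ha; omega
  · intro a ha; rw [Finset.mem_Icc] at ha; omega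
  · intro a ha; rw [Finset.mem_Icc] at ha
    congr 1; omega

lemma aux_trunc_lt (n : ℕ) (A : ℕ → ℝ) (hn : 2 ≤ n) :
    ∑ i ∈ Finset.Icc 1 n, (if i < n then A i else 0) = ∑ i ∈ Finset.Icc 1 (n - 1), A i := by
  rw [← Finset.sum_subset (Finset.Icc_subset_Icc_right (by omega) : Finset.Icc 1 (n-1) ⊆ Finset.Icc 1 n)]
  · apply Finset.sum_congr rfl; intro i hi; rw [Finset.mem_Icc] at hi; rw [if_pos (by omega)]
  · intro i hi hni; rw [Finset.mem_Icc] at *; rw [if_neg (by omega)]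

lemma aux_trunc_ge (n : ℕ) (B : ℕ → ℝ) (hn : 2 ≤ n) :
    ∑ i ∈ Finset.Icc 1 n, (if 2 ≤ i then B i else 0) = ∑ i ∈ Finset.Icc 1 (n - 1), B (i + 1) := by
  rw [← aux_reindex n B hn,
    ← Finset.sum_subset (Finset.Icc_subset_Icc_left (by omega) : Finset.Icc 2 n ⊆ Finset.Icc 1 n)]
  · apply Finset.sum_congr rfl; intro i hi; rw [Finset.mem_Icc] at hi; rw [if_pos (by omega)]
  · intro i hi hni; rw [Finset.mem_Icc] at *; rw [if_neg (by omega)]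


lemma aux_Phi (T ε : ℝ) (hT : 0 < T) (hε : 0 < ε) (μ : ℝ → ℝ)
    (hμ1 : ∀ t : ℝ, 0 ≤ t → t < T → μ t = (T + ε) / (T + ε - t))
    (hμ2 : ∀ t : ℝ, T ≤ t → μ t = 1 + T / ε) :
    ∃ Φ : ℝ → ℝ, Φ 0 = 0 ∧ Φ T = (T + ε) * Real.log ((T + ε) / ε) ∧
      (∀ t ∈ Ici (0:ℝ), HasDerivWithinAt Φ (μ t) (Ici 0) t) ∧
      Tendsto Φ atTop atTop := by
  set f₁ : ℝ → ℝ := fun t => (T + ε) * (Real.log (T + ε) - Real.log (T + ε - t)) with hf₁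
  set c : ℝ := (T + ε) * Real.log ((T + ε) / ε) with hc
  set f₂ : ℝ → ℝ := fun t => c + (1 + T / ε) * (t - T) with hf₂
  set Φ : ℝ → ℝ := fun t => if t ≤ T then f₁ t else f₂ t with hΦ
  have hTε : 0 < T + ε := by linarith
  have hεne : ε ≠ 0 := ne_of_gt hε
  have hf₁T : f₁ T = c := by
    simp only [hf₁, hc]
    rw [show T + ε - T = ε by ring, Real.log_div (ne_of_gt hTε) hεne]
  have hd1 : ∀ t : ℝ, t < T → HasDerivAt f₁ ((T + ε) / (T + ε - t)) t := by
    intro t ht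
    have hpos : 0 < T + ε - t := by linarith
    have : HasDerivAt (fun s : ℝ => T + ε - s) (-1) t := by
      simpa using (hasDerivAt_id t).const_sub (T + ε)
    have hlog : HasDerivAt (fun s => Real.log (T + ε - s)) (-1 / (T + ε - t)) t :=
      this.log (ne_of_gt hpos)
    have := ((hasDerivAt_const t (Real.log (T + ε))).sub hlog).const_mul (T + ε)
    refine this.congr_deriv ?_
    field_simp
    try ring
  have hd1T : HasDerivAt f₁ ((T + ε) / ε) T := by
    have hpos : 0 < T + ε - T := by linarith
    have : HasDerivAt (fun s : ℝ => T + ε - s) (-1) T := by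
      simpa using (hasDerivAt_id T).const_sub (T + ε)
    have hlog : HasDerivAt (fun s => Real.log (T + ε - s)) (-1 / (T + ε - T)) T :=
      this.log (ne_of_gt hpos)
    have := ((hasDerivAt_const T (Real.log (T + ε))).sub hlog).const_mul (T + ε)
    refine this.congr_deriv ?_
    rw [show T + ε - T = ε by ring]
    field_simp
    try ring
  have hd2 : ∀ t : ℝ, HasDerivAt f₂ (1 + T / ε) t := by
    intro t
    have : HasDerivAt (fun s : ℝ => s - T) 1 t := by
      simpa using (hasDerivAt_id t).sub_const T
    have h3 := (this.const_mul (1 + T / ε)).const_add c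
    rw [mul_one] at h3
    exact h3
  have hμT : (T + ε) / ε = 1 + T / ε := by field_simp; try ring
  refine ⟨Φ, ?_, ?_, ?_, ?_⟩
  · simp only [hΦ, if_pos hT.le, hf₁]
    rw [show T + ε - 0 = T + ε by ring]; ring
  · simp only [hΦ, if_pos le_rfl]; exact hf₁T
  · intro t ht
    rcases lt_trichotomy t T with h | h | h
    · have heq : Φ =ᶠ[nhds t] f₁ := by
        filter_upwards [Iio_mem_nhds h] with s hs
        simp only [hΦ]
        rw [if_pos (le_of_lt (mem_Iio.mp hs))]
      have := (hd1 t h).congr_of_eventuallyEq heq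
      rw [hμ1 t ht h]
      exact this.hasDerivWithinAt
    · rw [h] at ht ⊢
      rw [hμ2 T le_rfl, ← hμT]
      have hIic : HasDerivWithinAt Φ ((T + ε) / ε) (Iic T) T := by
        apply (hd1T.hasDerivWithinAt).congr
        · intro s hs; simp only [hΦ]; rw [if_pos (mem_Iic.mp hs)]
        · simp only [hΦ]; rw [if_pos le_rfl]
      have hIci : HasDerivWithinAt Φ ((T + ε) / ε) (Ici T) T := by
        have hd2' : HasDerivAt f₂ ((T + ε) / ε) T := by rw [hμT]; exact hd2 T
        apply (hd2'.hasDerivWithinAt).congr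
        · intro s hs
          rcases eq_or_lt_of_le (mem_Ici.mp hs) with h2 | h2
          · simp only [hΦ, ← h2]; rw [if_pos le_rfl, hf₁T]; simp [hf₂]
          · simp only [hΦ]; rw [if_neg (not_le.mpr h2)]
        · simp only [hΦ]; rw [if_pos le_rfl, hf₁T]; simp [hf₂]
      have := hIic.union hIci
      rw [Iic_union_Ici] at this
      exact (this.hasDerivAt univ_mem).hasDerivWithinAt
    · have heq : Φ =ᶠ[nhds t] f₂ := by
        filter_upwards [Ioi_mem_nhds h] with s hs
        simp only [hΦ]
        rw [if_neg (not_le.mpr (mem_Ioi.mp hs))]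
      have := (hd2 t).congr_of_eventuallyEq heq
      rw [hμ2 t h.le]
      exact this.hasDerivWithinAt
  · have h2 : Tendsto f₂ atTop atTop := by
      apply tendsto_atTop_add_const_left
      apply Tendsto.const_mul_atTop (by positivity : (0:ℝ) < 1 + T / ε)
      exact tendsto_atTop_add_const_right _ _ tendsto_id
    apply h2.congr'
    filter_upwards [eventually_gt_atTop T] with s hs
    simp only [hΦ, if_neg (not_le.mpr hs)]

lemma aux_decay (W W' h : ℝ → ℝ) (K : ℝ) (hK : 0 < K)
    (hWd : ∀ t ∈ Ici (0:ℝ), HasDerivWithinAt W (W' t) (Ici 0) t)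
    (hWpos : ∀ t ∈ Ici (0:ℝ), 0 ≤ W t)
    (hh : ContinuousOn h (Ici 0)) (hhpos : ∀ t ∈ Ici (0:ℝ), 0 ≤ h t)
    (hint : IntegrableOn h (Ici 0))
    (hineq : ∀ t ∈ Ici (0:ℝ), W' t ≤ -K * W t + h t) :
    (∀ t ∈ Ici (0:ℝ), W t ≤ W 0 + 2 * ∫ x in Ioi (0:ℝ), h x) ∧
      Tendsto W atTop (nhds 0) := by
  -- extension of h to all of ℝ
  set h' : ℝ → ℝ := fun τ => h (max τ 0) with hh'
  have hmax : Continuous (fun τ : ℝ => max τ 0) := continuous_id.max continuous_const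
  have hh'c : Continuous h' := by
    rw [← continuousOn_univ]
    exact hh.comp hmax.continuousOn (fun τ _ => mem_Ici.mpr (le_max_right _ _))
  have hh'pos : ∀ τ : ℝ, 0 ≤ h' τ := fun τ => hhpos _ (mem_Ici.mpr (le_max_right _ _))
  have hh'eq : ∀ τ ∈ Ici (0:ℝ), h' τ = h τ := by
    intro τ hτ; simp only [hh', max_eq_left (mem_Ici.mp hτ)]
  set L : ℝ := ∫ x in Ioi (0:ℝ), h x with hL
  set Q : ℝ → ℝ := fun t => ∫ τ in (0:ℝ)..t, h' τ with hQ
  have hQint : ∀ a b : ℝ, IntervalIntegrable h' volume a b := fun a b => hh'c.intervalIntegrable a b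
  have hint' : IntegrableOn h' (Ioi (0:ℝ)) := by
    apply (hint.mono_set Ioi_subset_Ici_self).congr_fun _ measurableSet_Ioi
    intro τ hτ; exact (hh'eq τ (Ioi_subset_Ici_self hτ)).symm
  have hLeq : (∫ x in Ioi (0:ℝ), h' x) = L := by
    rw [hL]; apply setIntegral_congr_fun measurableSet_Ioi
    intro τ hτ; exact hh'eq τ (Ioi_subset_Ici_self hτ)
  have hQtend : Tendsto Q atTop (nhds L) := by
    rw [← hLeq]
    exact intervalIntegral_tendsto_integral_Ioi (0:ℝ) hint' tendsto_id
  have hQle : ∀ t : ℝ, Q t ≤ L := by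
    intro t
    rcases le_or_gt t 0 with ht | ht
    · have heq : Q t = - ∫ τ in t..(0:ℝ), h' τ := intervalIntegral.integral_symm t 0
      rw [heq]
      have h1 : 0 ≤ ∫ τ in t..(0:ℝ), h' τ :=
        intervalIntegral.integral_nonneg ht (fun u _ => hh'pos u)
      have h2 : 0 ≤ L := setIntegral_nonneg measurableSet_Ioi
        (fun τ hτ => hhpos τ (Ioi_subset_Ici_self hτ))
      linarith
    · have heq : Q t = ∫ τ in Ioc (0:ℝ) t, h' τ := intervalIntegral.integral_of_le ht.le
      rw [heq]
      have : (∫ τ in Ioc 0 t, h' τ) ≤ ∫ τ in Ioi (0:ℝ), h' τ := by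
        apply setIntegral_mono_set hint'
        · filter_upwards with τ using hh'pos τ
        · exact HasSubset.Subset.eventuallyLE Ioc_subset_Ioi_self
      calc (∫ τ in Ioc 0 t, h' τ) ≤ ∫ τ in Ioi (0:ℝ), h' τ := this
        _ = L := hLeq
  have hQ0 : ∀ t : ℝ, 0 ≤ t → 0 ≤ Q t := fun t ht =>
    intervalIntegral.integral_nonneg ht (fun u _ => hh'pos u)
  -- the auxiliary decreasing function
  set E : ℝ → ℝ := fun t => Real.exp (K * t) with hE
  set Y : ℝ → ℝ := fun t => W t * E t - ∫ τ in (0:ℝ)..t, h' τ * E τ with hY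
  have hEd : ∀ t : ℝ, HasDerivAt E (K * E t) t := by
    intro t
    have := (Real.hasDerivAt_exp (K * t)).comp t ((hasDerivAt_id t).const_mul K)
    exact this.congr_deriv (by simp only [hE]; ring)
  have hintE : ∀ a b : ℝ, IntervalIntegrable (fun τ => h' τ * E τ) volume a b :=
    fun a b => (hh'c.mul (Real.continuous_exp.comp (continuous_const.mul continuous_id))).intervalIntegrable a b
  have hId : ∀ t : ℝ, HasDerivAt (fun u => ∫ τ in (0:ℝ)..u, h' τ * E τ) (h' t * E t) t := by
    intro t
    exact intervalIntegral.integral_hasDerivAt_right (hintE 0 t)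
      ((hh'c.mul (Real.continuous_exp.comp (continuous_const.mul continuous_id))).stronglyMeasurable.stronglyMeasurableAtFilter)
      ((hh'c.mul (Real.continuous_exp.comp (continuous_const.mul continuous_id))).continuousAt)
  have hYanti : AntitoneOn Y (Ici 0) := by
    apply aux_antitoneOn Y (fun t => (W' t + K * W t) * E t - h' t * E t)
    · intro t ht
      exact (((hWd t ht).mul ((hEd t).hasDerivWithinAt)).sub ((hId t).hasDerivWithinAt)).congr_deriv (by ring)
    · intro t ht
      have h1 : W' t + K * W t ≤ h t := by have := hineq t ht; linarith
      have h2 : 0 < E t := Real.exp_pos _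
      have h3 : h' t = h t := hh'eq t ht
      nlinarith
  have hY0 : ∀ t ∈ Ici (0:ℝ), Y t ≤ W 0 := by
    intro t ht
    have := hYanti (mem_Ici.mpr le_rfl) ht (mem_Ici.mp ht)
    simpa [hY, hE, intervalIntegral.integral_same] using this
  -- main estimate
  have hmain : ∀ t ∈ Ici (0:ℝ), W t ≤ Real.exp (-(K * t)) * W 0
      + Real.exp (-(K * t / 2)) * L + (Q t - Q (t / 2)) := by
    intro t ht
    have ht0 : (0:ℝ) ≤ t := ht
    have hEt : 0 < E t := Real.exp_pos _
    have hsplit : (∫ τ in (0:ℝ)..t, h' τ * E τ)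
        = (∫ τ in (0:ℝ)..(t/2), h' τ * E τ) + ∫ τ in (t/2)..t, h' τ * E τ :=
      (intervalIntegral.integral_add_adjacent_intervals (hintE 0 (t/2)) (hintE (t/2) t)).symm
    have hb1 : (∫ τ in (0:ℝ)..(t/2), h' τ * E τ) ≤ Real.exp (K * (t/2)) * Q (t/2) := by
      have : (∫ τ in (0:ℝ)..(t/2), h' τ * E τ) ≤ ∫ τ in (0:ℝ)..(t/2), Real.exp (K * (t/2)) * h' τ := by
        apply intervalIntegral.integral_mono_on (by linarith) (hintE 0 (t/2))
          ((continuous_const.mul hh'c).intervalIntegrable _ _)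
        intro τ hτ
        rw [Set.mem_Icc] at hτ
        have : E τ ≤ Real.exp (K * (t/2)) := by
          apply Real.exp_le_exp.mpr
          have := hτ.2
          nlinarith
        have h0 := hh'pos τ
        calc h' τ * E τ ≤ h' τ * Real.exp (K * (t/2)) := by nlinarith
          _ = Real.exp (K * (t/2)) * h' τ := by ring
      rwa [intervalIntegral.integral_const_mul] at this
    have hb2 : (∫ τ in (t/2)..t, h' τ * E τ) ≤ E t * (Q t - Q (t/2)) := by
      have hadj : Q (t/2) + (∫ τ in (t/2)..t, h' τ) = Q t :=
        intervalIntegral.integral_add_adjacent_intervals (hQint 0 (t/2)) (hQint (t/2) t)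
      have heq : Q t - Q (t/2) = ∫ τ in (t/2)..t, h' τ := by rw [← hadj]; ring
      rw [heq]
      have : (∫ τ in (t/2)..t, h' τ * E τ) ≤ ∫ τ in (t/2)..t, E t * h' τ := by
        apply intervalIntegral.integral_mono_on (by linarith) (hintE (t/2) t)
          ((continuous_const.mul hh'c).intervalIntegrable _ _)
        intro τ hτ
        rw [Set.mem_Icc] at hτ
        have hle : E τ ≤ E t := Real.exp_le_exp.mpr (by nlinarith [hτ.2])
        have h0 := hh'pos τ
        calc h' τ * E τ ≤ h' τ * E t := by nlinarith
          _ = E t * h' τ := by ring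
      rwa [intervalIntegral.integral_const_mul] at this
    have hYt := hY0 t ht
    -- Y t = W t * E t - ∫ ...
    have : W t * E t ≤ W 0 + Real.exp (K * (t/2)) * Q (t/2) + E t * (Q t - Q (t/2)) := by
      have : W t * E t - ((∫ τ in (0:ℝ)..(t/2), h' τ * E τ) + ∫ τ in (t/2)..t, h' τ * E τ) ≤ W 0 := by
        rw [← hsplit]; exact hYt
      linarith
    have hWt : W t ≤ (W 0 + Real.exp (K * (t/2)) * Q (t/2) + E t * (Q t - Q (t/2))) / E t :=
      (le_div_iff₀ hEt).mpr this
    have hQhalf : Q (t/2) ≤ L := hQle (t/2)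
    have hQdiff : 0 ≤ Q t - Q (t/2) := by
      have hadj : Q (t/2) + (∫ τ in (t/2)..t, h' τ) = Q t :=
        intervalIntegral.integral_add_adjacent_intervals (hQint 0 (t/2)) (hQint (t/2) t)
      have heq2 : Q t - Q (t/2) = ∫ τ in (t/2)..t, h' τ := by rw [← hadj]; ring
      rw [heq2]
      exact intervalIntegral.integral_nonneg (by linarith) (fun u _ => hh'pos u)
    have hexp : Real.exp (K * (t/2)) / E t = Real.exp (-(K * t / 2)) := by
      rw [hE, ← Real.exp_sub]; congr 1; ring
    have e1 : Real.exp (-(K * t)) * E t = 1 := by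
      show Real.exp (-(K * t)) * Real.exp (K * t) = 1
      rw [← Real.exp_add]; simp
    have e2 : Real.exp (-(K * t / 2)) * E t = Real.exp (K * (t/2)) := by
      show Real.exp (-(K * t / 2)) * Real.exp (K * t) = Real.exp (K * (t/2))
      rw [← Real.exp_add]; congr 1; ring
    calc W t ≤ (W 0 + Real.exp (K * (t/2)) * Q (t/2) + E t * (Q t - Q (t/2))) / E t := hWt
      _ = Real.exp (-(K*t)) * W 0 + Real.exp (-(K * t / 2)) * Q (t/2) + (Q t - Q (t/2)) := by
        rw [div_eq_iff (ne_of_gt hEt)]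
        linear_combination (-(W 0)) * e1 - Q (t/2) * e2
      _ ≤ Real.exp (-(K * t)) * W 0 + Real.exp (-(K * t / 2)) * L + (Q t - Q (t/2)) := by
        have : Real.exp (-(K * t / 2)) * Q (t/2) ≤ Real.exp (-(K * t / 2)) * L :=
          mul_le_mul_of_nonneg_left hQhalf (Real.exp_pos _).le
        linarith
  constructor
  · intro t ht
    have := hmain t ht
    have h1 : Real.exp (-(K * t)) ≤ 1 := Real.exp_le_one_iff.mpr (by nlinarith [mem_Ici.mp ht])
    have h2 : Real.exp (-(K * t / 2)) ≤ 1 := Real.exp_le_one_iff.mpr (by nlinarith [mem_Ici.mp ht])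
    have hW0 : 0 ≤ W 0 := hWpos 0 (mem_Ici.mpr le_rfl)
    have hLpos : 0 ≤ L := setIntegral_nonneg measurableSet_Ioi
      (fun τ hτ => hhpos τ (Ioi_subset_Ici_self hτ))
    have hQt := hQle t
    have hQh := hQ0 (t/2) (by have := mem_Ici.mp ht; linarith)
    nlinarith [Real.exp_pos (-(K*t)), Real.exp_pos (-(K*t/2))]
  · -- convergence
    have hKt : Tendsto (fun t : ℝ => K * t) atTop atTop :=
      Tendsto.const_mul_atTop hK tendsto_id
    have hgen : ∀ c : ℝ, 0 < c → Tendsto (fun t : ℝ => Real.exp (-(K * t / c))) atTop (nhds 0) := by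
      intro c hc
      apply Real.tendsto_exp_atBot.comp
      apply tendsto_neg_atTop_atBot.comp
      exact (hKt.atTop_div_const hc)
    have hb1 : Tendsto (fun t => Real.exp (-(K * t)) * W 0) atTop (nhds 0) := by
      have h1 : Tendsto (fun t : ℝ => Real.exp (-(K * t))) atTop (nhds 0) := by
        have := hgen 1 one_pos
        simpa using this
      simpa using h1.mul_const (W 0)
    have hb2 : Tendsto (fun t => Real.exp (-(K * t / 2)) * L) atTop (nhds 0) := by
      simpa using (hgen 2 two_pos).mul_const L
    have hb3 : Tendsto (fun t => Q t - Q (t / 2)) atTop (nhds 0) := by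
      have h2 : Tendsto (fun t : ℝ => t / 2) atTop atTop := tendsto_id.atTop_div_const two_pos
      have := hQtend.sub (hQtend.comp h2)
      simpa using this
    have hsum : Tendsto (fun t => Real.exp (-(K * t)) * W 0
        + Real.exp (-(K * t / 2)) * L + (Q t - Q (t/2))) atTop (nhds 0) := by
      have := (hb1.add hb2).add hb3
      simpa using this
    apply tendsto_of_tendsto_of_tendsto_of_le_of_le' tendsto_const_nhds hsum
    · filter_upwards [eventually_ge_atTop (0:ℝ)] with t ht
      exact hWpos t (mem_Ici.mpr ht)
    · filter_upwards [eventually_ge_atTop (0:ℝ)] with t ht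
      exact hmain t (mem_Ici.mpr ht)


set_option maxHeartbeats 4000000 in
/-- Theorem 1 of the paper, along a fixed closed-loop solution of the strict-feedback-like
plant `ẋᵢ = gᵢxᵢ₊₁ + fᵢ`, `ẋₙ = gₙu + fₙ`, with time-varying command filters, softening-sign
error compensator and time-varying feedback controller: the compensated-error Lyapunov
function `Vₙ = (1/2)Σsᵢ²` is bounded and satisfies the prescribed-time bound
`Vₙ(T) ≤ Vₙ(0)·(ε/(T+ε))^(K₁(T+ε))`; all `sᵢ` and `ζᵢ` tend to zero; hence the tracking
error `z₁ = x₁ − x_d` is bounded and tends to zero. -/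
theorem theorem1
    (n : ℕ) (hn : 2 ≤ n)
    (T ε : ℝ) (hT : 0 < T) (hε : 0 < ε) (hεT : ε < T)
    (μ : ℝ → ℝ)
    (hμ1 : ∀ t : ℝ, 0 ≤ t → t < T → μ t = (T + ε) / (T + ε - t))
    (hμ2 : ∀ t : ℝ, T ≤ t → μ t = 1 + T / ε)
    -- reference trajectory
    (xd xd' : ℝ → ℝ)
    (hxd_deriv : ∀ t ≥ (0:ℝ), HasDerivWithinAt xd (xd' t) (Set.Ici (0:ℝ)) t)
    (hxd'_cont : ContinuousOn xd' (Set.Ici (0:ℝ)))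
    (hxd_bdd : ∃ M : ℝ, ∀ t ≥ (0:ℝ), |xd t| ≤ M ∧ |xd' t| ≤ M)
    -- design parameters
    (k : ℕ → ℝ) (hk : ∀ i ∈ Finset.Icc 1 n, 0 < k i)
    (δ : ℕ → ℝ) (hδ : ∀ i ∈ Finset.Icc 1 (n - 1), 0 < δ i)
    (σ : ℕ → ℝ → ℝ) (σbar : ℕ → ℝ)
    (hσcont : ∀ i ∈ Finset.Icc 1 n, ContinuousOn (σ i) (Set.Ici (0:ℝ)))
    (hσpos : ∀ i ∈ Finset.Icc 1 n, ∀ t ≥ (0:ℝ), 0 < σ i t)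
    (hσint : ∀ i ∈ Finset.Icc 1 n, MeasureTheory.IntegrableOn (σ i) (Set.Ici (0:ℝ)) ∧
      ∫ t in Set.Ici (0:ℝ), σ i t ≤ σbar i)
    -- closed-loop signals
    (x : ℕ → ℝ → ℝ) (u : ℝ → ℝ)
    (α αhat αhat' : ℕ → ℝ → ℝ) (ζ : ℕ → ℝ → ℝ)
    -- system functions along the solution
    (f g : ℕ → ℝ → ℝ) (g₀ : ℝ) (hg₀ : 0 < g₀)
    (hfcont : ∀ i ∈ Finset.Icc 1 n, ContinuousOn (f i) (Set.Ici (0:ℝ)))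
    (hgcont : ∀ i ∈ Finset.Icc 1 n, ContinuousOn (g i) (Set.Ici (0:ℝ)))
    (hfg_bdd : ∃ M : ℝ, ∀ i ∈ Finset.Icc 1 n, ∀ t ≥ (0:ℝ), |f i t| ≤ M ∧ |g i t| ≤ M)
    (hg_lower : ∀ i ∈ Finset.Icc 1 n, ∀ t ≥ (0:ℝ), g₀ ≤ g i t)
    -- plant
    (hplant : ∀ i ∈ Finset.Icc 1 (n - 1), ∀ t ≥ (0:ℝ),
      HasDerivWithinAt (x i) (g i t * x (i + 1) t + f i t) (Set.Ici (0:ℝ)) t)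
    (hplantn : ∀ t ≥ (0:ℝ),
      HasDerivWithinAt (x n) (g n t * u t + f n t) (Set.Ici (0:ℝ)) t)
    -- command filters with time-varying gain
    (hfilt_deriv : ∀ i ∈ Finset.Icc 1 (n - 1), ∀ t ≥ (0:ℝ),
      HasDerivWithinAt (αhat i) (αhat' i t) (Set.Ici (0:ℝ)) t)
    (hfilt : ∀ i ∈ Finset.Icc 1 (n - 1), ∀ t ≥ (0:ℝ),
      δ i * αhat' i t = μ t * (α i t - αhat i t))
    (hfilt0 : ∀ i ∈ Finset.Icc 1 (n - 1), αhat i 0 = α i 0)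
    (τ l : ℕ → ℝ)
    (hfilt_err : ∀ i ∈ Finset.Icc 1 (n - 1), ∀ t ≥ (0:ℝ), |αhat i t - α i t| ≤ τ i)
    (hl : ∀ i ∈ Finset.Icc 1 (n - 1), sSup ((g i) '' Set.Ici (0:ℝ)) * τ i ≤ l i)
    (hln : 0 ≤ l n)
    -- coordinate changes and compensated tracking errors
    (z s : ℕ → ℝ → ℝ)
    (hz1 : ∀ t : ℝ, z 1 t = x 1 t - xd t)
    (hz : ∀ i ∈ Finset.Icc 2 n, ∀ t : ℝ, z i t = x i t - αhat (i - 1) t)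
    (hs : ∀ i ∈ Finset.Icc 1 n, ∀ t : ℝ, s i t = z i t - ζ i t)
    -- time-varying error compensator
    (hζ0 : ∀ i ∈ Finset.Icc 1 n, ζ i 0 = 0)
    (hζ1 : ∀ t ≥ (0:ℝ), HasDerivWithinAt (ζ 1)
      (-k 1 * μ t * ζ 1 t + g 1 t * (αhat 1 t - α 1 t) + g 1 t * ζ 2 t
        - l 1 * ζ 1 t / Real.sqrt ((ζ 1 t) ^ 2 + (σ 1 t) ^ 2)) (Set.Ici (0:ℝ)) t)
    (hζmid : ∀ i ∈ Finset.Icc 2 (n - 1), ∀ t ≥ (0:ℝ), HasDerivWithinAt (ζ i)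
      (-k i * μ t * ζ i t + g i t * (αhat i t - α i t) + g i t * ζ (i + 1) t
        - g (i - 1) t * ζ (i - 1) t
        - l i * ζ i t / Real.sqrt ((ζ i t) ^ 2 + (σ i t) ^ 2)) (Set.Ici (0:ℝ)) t)
    (hζn : ∀ t ≥ (0:ℝ), HasDerivWithinAt (ζ n)
      (-k n * μ t * ζ n t - g (n - 1) t * ζ (n - 1) t
        - l n * ζ n t / Real.sqrt ((ζ n t) ^ 2 + (σ n t) ^ 2)) (Set.Ici (0:ℝ)) t)
    -- virtual and actual controllers
    (hα1 : ∀ t ≥ (0:ℝ), α 1 t = (1 / g 1 t) *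
      (-k 1 * μ t * z 1 t + xd' t - f 1 t
        - l 1 * ζ 1 t / Real.sqrt ((ζ 1 t) ^ 2 + (σ 1 t) ^ 2)
        - s 1 t / Real.sqrt ((s 1 t) ^ 2 + (σ 1 t) ^ 2)))
    (hαmid : ∀ i ∈ Finset.Icc 2 (n - 1), ∀ t ≥ (0:ℝ), α i t = (1 / g i t) *
      (-k i * μ t * z i t + αhat' (i - 1) t - f i t - g (i - 1) t * z (i - 1) t
        - l i * ζ i t / Real.sqrt ((ζ i t) ^ 2 + (σ i t) ^ 2)
        - s i t / Real.sqrt ((s i t) ^ 2 + (σ i t) ^ 2)))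
    (hu : ∀ t ≥ (0:ℝ), u t = (1 / g n t) *
      (-k n * μ t * z n t + αhat' (n - 1) t - f n t - g (n - 1) t * z (n - 1) t
        - l n * ζ n t / Real.sqrt ((ζ n t) ^ 2 + (σ n t) ^ 2)
        - s n t / Real.sqrt ((s n t) ^ 2 + (σ n t) ^ 2)))
    (K₁ : ℝ)
    (hK₁ : K₁ = 2 * (Finset.Icc 1 n).inf' (Finset.nonempty_Icc.mpr (by omega)) k) :
    -- (i) boundedness and prescribed-time bound for Vₙ = (1/2)Σ sᵢ²
    ((∃ M : ℝ, ∀ t ≥ (0:ℝ), (1 / 2 : ℝ) * ∑ i ∈ Finset.Icc 1 n, (s i t) ^ 2 ≤ M) ∧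
      (1 / 2 : ℝ) * ∑ i ∈ Finset.Icc 1 n, (s i T) ^ 2 ≤
        ((1 / 2 : ℝ) * ∑ i ∈ Finset.Icc 1 n, (s i 0) ^ 2) *
          (ε / (T + ε)) ^ (K₁ * (T + ε))) ∧
    -- (ii) asymptotic convergence of sᵢ and ζᵢ
    (∀ i ∈ Finset.Icc 1 n,
      Tendsto (s i) atTop (nhds 0) ∧ Tendsto (ζ i) atTop (nhds 0)) ∧
    -- (iii) boundedness and asymptotic convergence of the tracking error
    ((∃ M : ℝ, ∀ t ≥ (0:ℝ), |x 1 t - xd t| ≤ M) ∧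
      Tendsto (fun t => x 1 t - xd t) atTop (nhds 0)) := by
  have hTε : (0:ℝ) < T + ε := by linarith
  -- basic facts about μ
  have hμge1 : ∀ t : ℝ, 0 ≤ t → 1 ≤ μ t := by
    intro t ht
    rcases lt_or_ge t T with h | h
    · rw [hμ1 t ht h, le_div_iff₀ (by linarith)]; linarith
    · rw [hμ2 t h]
      have : 0 < T / ε := div_pos hT hε
      linarith
  -- K₁
  have hkmin : ∀ i ∈ Finset.Icc 1 n, K₁ ≤ 2 * k i := by
    intro i hi
    rw [hK₁]
    have := Finset.inf'_le (s := Finset.Icc 1 n) k hi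
    linarith
  have hK₁pos : 0 < K₁ := by
    rw [hK₁]
    have : 0 < (Finset.Icc 1 n).inf' (Finset.nonempty_Icc.mpr (by omega)) k := by
      rw [Finset.lt_inf'_iff]; exact hk
    linarith
  -- positivity of g
  have hgpos : ∀ i ∈ Finset.Icc 1 n, ∀ t : ℝ, 0 ≤ t → 0 < g i t :=
    fun i hi t ht => lt_of_lt_of_le hg₀ (hg_lower i hi t ht)
  -- τ is nonnegative, l is nonnegative
  have hτ0 : ∀ i ∈ Finset.Icc 1 (n - 1), 0 ≤ τ i :=
    fun i hi => le_trans (abs_nonneg _) (hfilt_err i hi 0 le_rfl)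
  obtain ⟨Mg, hMg⟩ := hfg_bdd
  have hgS : ∀ i ∈ Finset.Icc 1 n, ∀ t : ℝ, 0 ≤ t → g i t ≤ sSup ((g i) '' Set.Ici (0:ℝ)) := by
    intro i hi t ht
    apply le_csSup
    · exact ⟨Mg, by rintro y ⟨τ', hτ', rfl⟩; exact le_of_abs_le (hMg i hi τ' hτ').2⟩
    · exact mem_image_of_mem _ (mem_Ici.mpr ht)
  have hl0 : ∀ i ∈ Finset.Icc 1 (n - 1), 0 ≤ l i := by
    intro i hi
    have hi' : i ∈ Finset.Icc 1 n := by rw [Finset.mem_Icc] at *; omega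
    have h1 : g₀ ≤ sSup ((g i) '' Set.Ici (0:ℝ)) :=
      le_trans (hg_lower i hi' 0 le_rfl) (hgS i hi' 0 le_rfl)
    have := hl i hi
    nlinarith [hτ0 i hi]
  have hl0' : ∀ i ∈ Finset.Icc 1 n, 0 ≤ l i := by
    intro i hi
    rw [Finset.mem_Icc] at hi
    rcases eq_or_lt_of_le hi.2 with h | h
    · rw [h]; exact hln
    · exact hl0 i (by rw [Finset.mem_Icc]; omega)
  -- derivative of the compensated errors s i
  set ds : ℕ → ℝ → ℝ := fun i t =>
    -k i * μ t * s i t - s i t / Real.sqrt ((s i t) ^ 2 + (σ i t) ^ 2)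
    + (if i < n then g i t * s (i + 1) t else 0)
    - (if 2 ≤ i then g (i - 1) t * s (i - 1) t else 0) with hds
  have hsd : ∀ i ∈ Finset.Icc 1 n, ∀ t ∈ Ici (0:ℝ), HasDerivWithinAt (s i) (ds i t) (Ici 0) t := by
    intro i hi t ht
    have ht' : (0:ℝ) ≤ t := ht
    rw [Finset.mem_Icc] at hi
    rcases show i = 1 ∨ (2 ≤ i ∧ i ≤ n - 1) ∨ i = n by omega with h1 | hmid | hend
    · subst h1
      have hm2 : (2:ℕ) ∈ Finset.Icc 2 n := by rw [Finset.mem_Icc]; omega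
      have e2 : x 2 t = z 2 t + αhat 1 t := by
        have h := hz 2 hm2 t
        norm_num at h
        linear_combination -h
      have hg1 : g 1 t ≠ 0 := ne_of_gt (hgpos 1 (by rw [Finset.mem_Icc]; omega) t ht')
      have e3 : g 1 t * α 1 t = -k 1 * μ t * z 1 t + xd' t - f 1 t
          - l 1 * ζ 1 t / Real.sqrt ((ζ 1 t) ^ 2 + (σ 1 t) ^ 2)
          - s 1 t / Real.sqrt ((s 1 t) ^ 2 + (σ 1 t) ^ 2) := by
        rw [hα1 t ht', one_div]
        exact mul_inv_cancel_left₀ hg1 _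
      have e4 := hs 1 (by rw [Finset.mem_Icc]; omega) t
      have e5 := hs 2 (by rw [Finset.mem_Icc]; omega) t
      have hzd : HasDerivWithinAt (z 1) (g 1 t * x 2 t + f 1 t - xd' t) (Ici 0) t := by
        have hzf : z 1 = fun τ => x 1 τ - xd τ := funext hz1
        rw [hzf]
        exact (hplant 1 (by rw [Finset.mem_Icc]; omega) t ht').sub (hxd_deriv t ht')
      have hsd1 : HasDerivWithinAt (s 1)
          ((g 1 t * x 2 t + f 1 t - xd' t) -
            (-k 1 * μ t * ζ 1 t + g 1 t * (αhat 1 t - α 1 t) + g 1 t * ζ 2 t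
              - l 1 * ζ 1 t / Real.sqrt ((ζ 1 t) ^ 2 + (σ 1 t) ^ 2))) (Ici 0) t := by
        have hsf : s 1 = fun τ => z 1 τ - ζ 1 τ := funext (hs 1 (by rw [Finset.mem_Icc]; omega))
        rw [hsf]
        exact hzd.sub (hζ1 t ht')
      apply hsd1.congr_deriv
      simp only [hds]
      rw [if_pos (by omega : 1 < n), if_neg (by omega : ¬ (2:ℕ) ≤ 1)]
      linear_combination g 1 t * e2 + e3 + (k 1 * μ t) * e4 + (-(g 1 t)) * e5
    · obtain ⟨h2i, hin⟩ := hmid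
      have hiIcc1n1 : i ∈ Finset.Icc 1 (n - 1) := by rw [Finset.mem_Icc]; omega
      have hiIcc2n1 : i ∈ Finset.Icc 2 (n - 1) := by rw [Finset.mem_Icc]; omega
      have hi1Icc2n : i + 1 ∈ Finset.Icc 2 n := by rw [Finset.mem_Icc]; omega
      have hiIcc2n : i ∈ Finset.Icc 2 n := by rw [Finset.mem_Icc]; omega
      have him1 : i - 1 ∈ Finset.Icc 1 (n - 1) := by rw [Finset.mem_Icc]; omega
      have e2 : x (i + 1) t = z (i + 1) t + αhat i t := by
        have h := hz (i + 1) hi1Icc2n t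
        rw [Nat.add_sub_cancel] at h
        linear_combination -h
      have hgi : g i t ≠ 0 := ne_of_gt (hgpos i (by rw [Finset.mem_Icc]; omega) t ht')
      have e3 : g i t * α i t = -k i * μ t * z i t + αhat' (i - 1) t - f i t
          - g (i - 1) t * z (i - 1) t
          - l i * ζ i t / Real.sqrt ((ζ i t) ^ 2 + (σ i t) ^ 2)
          - s i t / Real.sqrt ((s i t) ^ 2 + (σ i t) ^ 2) := by
        rw [hαmid i hiIcc2n1 t ht', one_div]
        exact mul_inv_cancel_left₀ hgi _
      have e4 := hs i (by rw [Finset.mem_Icc]; omega) t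
      have e5 := hs (i + 1) (by rw [Finset.mem_Icc]; omega) t
      have e6 := hs (i - 1) (by rw [Finset.mem_Icc]; omega) t
      have hzd : HasDerivWithinAt (z i)
          (g i t * x (i + 1) t + f i t - αhat' (i - 1) t) (Ici 0) t := by
        have hzf : z i = fun τ => x i τ - αhat (i - 1) τ := funext (hz i hiIcc2n)
        rw [hzf]
        exact (hplant i hiIcc1n1 t ht').sub (hfilt_deriv (i - 1) him1 t ht')
      have hsdi : HasDerivWithinAt (s i)
          ((g i t * x (i + 1) t + f i t - αhat' (i - 1) t) -
            (-k i * μ t * ζ i t + g i t * (αhat i t - α i t) + g i t * ζ (i + 1) t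
              - g (i - 1) t * ζ (i - 1) t
              - l i * ζ i t / Real.sqrt ((ζ i t) ^ 2 + (σ i t) ^ 2))) (Ici 0) t := by
        have hsf : s i = fun τ => z i τ - ζ i τ := funext (hs i (by rw [Finset.mem_Icc]; omega))
        rw [hsf]
        exact hzd.sub (hζmid i hiIcc2n1 t ht')
      apply hsdi.congr_deriv
      simp only [hds]
      rw [if_pos (by omega : i < n), if_pos h2i]
      linear_combination g i t * e2 + e3 + (k i * μ t) * e4 + (-(g i t)) * e5 + g (i - 1) t * e6
    · rw [hend]
      have hgn : g n t ≠ 0 := ne_of_gt (hgpos n (by rw [Finset.mem_Icc]; omega) t ht')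
      have e3 : g n t * u t = -k n * μ t * z n t + αhat' (n - 1) t - f n t
          - g (n - 1) t * z (n - 1) t
          - l n * ζ n t / Real.sqrt ((ζ n t) ^ 2 + (σ n t) ^ 2)
          - s n t / Real.sqrt ((s n t) ^ 2 + (σ n t) ^ 2) := by
        rw [hu t ht', one_div]
        exact mul_inv_cancel_left₀ hgn _
      have e4 := hs n (by rw [Finset.mem_Icc]; omega) t
      have e6 := hs (n - 1) (by rw [Finset.mem_Icc]; omega) t
      have hzd : HasDerivWithinAt (z n)
          (g n t * u t + f n t - αhat' (n - 1) t) (Ici 0) t := by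
        have hzf : z n = fun τ => x n τ - αhat (n - 1) τ :=
          funext (hz n (by rw [Finset.mem_Icc]; omega))
        rw [hzf]
        exact (hplantn t ht').sub (hfilt_deriv (n - 1) (by rw [Finset.mem_Icc]; omega) t ht')
      have hsdn : HasDerivWithinAt (s n)
          ((g n t * u t + f n t - αhat' (n - 1) t) -
            (-k n * μ t * ζ n t - g (n - 1) t * ζ (n - 1) t
              - l n * ζ n t / Real.sqrt ((ζ n t) ^ 2 + (σ n t) ^ 2))) (Ici 0) t := by
        have hsf : s n = fun τ => z n τ - ζ n τ := funext (hs n (by rw [Finset.mem_Icc]; omega))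
        rw [hsf]
        exact hzd.sub (hζn t ht')
      apply hsdn.congr_deriv
      simp only [hds]
      rw [if_neg (lt_irrefl n), if_pos (by omega : 2 ≤ n)]
      linear_combination e3 + (k n * μ t) * e4 + g (n - 1) t * e6
  -- derivative of the compensator states
  set dζ : ℕ → ℝ → ℝ := fun i t =>
    -k i * μ t * ζ i t
    + (if i < n then g i t * (αhat i t - α i t) + g i t * ζ (i + 1) t else 0)
    - (if 2 ≤ i then g (i - 1) t * ζ (i - 1) t else 0)
    - l i * ζ i t / Real.sqrt ((ζ i t) ^ 2 + (σ i t) ^ 2) with hdζ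
  have hζd : ∀ i ∈ Finset.Icc 1 n, ∀ t ∈ Ici (0:ℝ), HasDerivWithinAt (ζ i) (dζ i t) (Ici 0) t := by
    intro i hi t ht
    have ht' : (0:ℝ) ≤ t := ht
    rw [Finset.mem_Icc] at hi
    rcases show i = 1 ∨ (2 ≤ i ∧ i ≤ n - 1) ∨ i = n by omega with h1 | hmid | hend
    · subst h1
      apply (hζ1 t ht').congr_deriv
      simp only [hdζ]
      rw [if_pos (by omega : 1 < n), if_neg (by omega : ¬ (2:ℕ) ≤ 1)]
      ring
    · apply (hζmid i (by rw [Finset.mem_Icc]; omega) t ht').congr_deriv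
      simp only [hdζ]
      rw [if_pos (by omega : i < n), if_pos (by omega : 2 ≤ i)]
      ring
    · rw [hend]
      apply (hζn t ht').congr_deriv
      simp only [hdζ]
      rw [if_neg (lt_irrefl n), if_pos (by omega : 2 ≤ n)]
      ring
  -- derivative of a sum of squares
  have hsum_deriv : ∀ (w dw : ℕ → ℝ → ℝ),
      (∀ i ∈ Finset.Icc 1 n, ∀ t ∈ Ici (0:ℝ), HasDerivWithinAt (w i) (dw i t) (Ici 0) t) →
      ∀ t ∈ Ici (0:ℝ), HasDerivWithinAt (fun τ => ∑ i ∈ Finset.Icc 1 n, (w i τ) ^ 2)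
        (∑ i ∈ Finset.Icc 1 n, 2 * w i t * dw i t) (Ici 0) t := by
    intro w dw hw t ht
    apply HasDerivWithinAt.fun_sum
    intro i hi
    apply ((hw i hi t ht).pow 2).congr_deriv
    push_cast
    ring
  set Ws : ℝ → ℝ := fun t => ∑ i ∈ Finset.Icc 1 n, (s i t) ^ 2 with hWs
  set Wz : ℝ → ℝ := fun t => ∑ i ∈ Finset.Icc 1 n, (ζ i t) ^ 2 with hWz
  have hWsd := hsum_deriv s ds hsd
  have hWzd := hsum_deriv ζ dζ hζd
  have hWs0 : ∀ t : ℝ, 0 ≤ Ws t := fun t => Finset.sum_nonneg fun i _ => sq_nonneg _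
  have hWz0 : ∀ t : ℝ, 0 ≤ Wz t := fun t => Finset.sum_nonneg fun i _ => sq_nonneg _
  -- key inequality for Ws
  have hWsineq : ∀ t ∈ Ici (0:ℝ),
      (∑ i ∈ Finset.Icc 1 n, 2 * s i t * ds i t) ≤ -K₁ * μ t * Ws t := by
    intro t ht
    have hsplit : (∑ i ∈ Finset.Icc 1 n, 2 * s i t * ds i t)
        = (∑ i ∈ Finset.Icc 1 n, (-2 * k i * μ t * (s i t) ^ 2
            - 2 * (s i t) ^ 2 / Real.sqrt ((s i t) ^ 2 + (σ i t) ^ 2)))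
          + ((∑ i ∈ Finset.Icc 1 n, (if i < n then 2 * g i t * s i t * s (i + 1) t else 0))
          - (∑ i ∈ Finset.Icc 1 n, (if 2 ≤ i then 2 * g (i - 1) t * s i t * s (i - 1) t else 0))) := by
      rw [← Finset.sum_sub_distrib, ← Finset.sum_add_distrib]
      apply Finset.sum_congr rfl
      intro i hi
      simp only [hds]
      split_ifs <;> ring
    have hcross : (∑ i ∈ Finset.Icc 1 n, (if i < n then 2 * g i t * s i t * s (i + 1) t else 0))
        = (∑ i ∈ Finset.Icc 1 n, (if 2 ≤ i then 2 * g (i - 1) t * s i t * s (i - 1) t else 0)) := by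
      rw [aux_trunc_lt n _ hn, aux_trunc_ge n _ hn]
      apply Finset.sum_congr rfl
      intro i hi
      rw [Nat.add_sub_cancel]
      ring
    rw [hsplit, hcross, sub_self, add_zero]
    have hterm : ∀ i ∈ Finset.Icc 1 n, -2 * k i * μ t * (s i t) ^ 2
        - 2 * (s i t) ^ 2 / Real.sqrt ((s i t) ^ 2 + (σ i t) ^ 2)
          ≤ -K₁ * μ t * (s i t) ^ 2 := by
      intro i hi
      have h1 := hkmin i hi
      have h2 : (0:ℝ) ≤ 2 * (s i t) ^ 2 / Real.sqrt ((s i t) ^ 2 + (σ i t) ^ 2) :=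
        div_nonneg (by positivity) (Real.sqrt_nonneg _)
      have h3 : 1 ≤ μ t := hμge1 t ht
      have h4 : 0 ≤ (2 * k i - K₁) * μ t * (s i t) ^ 2 :=
        mul_nonneg (mul_nonneg (by linarith) (by linarith)) (sq_nonneg _)
      nlinarith
    have h := Finset.sum_le_sum hterm
    rw [← Finset.mul_sum] at h
    simpa only [hWs] using h
  have hWsineq' : ∀ t ∈ Ici (0:ℝ),
      (∑ i ∈ Finset.Icc 1 n, 2 * s i t * ds i t) ≤ -K₁ * Ws t + (fun _ : ℝ => (0:ℝ)) t := by
    intro t ht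
    have h1 := hWsineq t ht
    have h2 := hμge1 t ht
    have h3 := hWs0 t
    have h4 : -K₁ * μ t * Ws t ≤ -K₁ * Ws t := by nlinarith [mul_nonneg (mul_nonneg hK₁pos.le h3) (by linarith : (0:ℝ) ≤ μ t - 1)]
    simpa using le_trans h1 h4
  obtain ⟨hWsbd, hWstend⟩ := aux_decay Ws (fun t => ∑ i ∈ Finset.Icc 1 n, 2 * s i t * ds i t)
    (fun _ => 0) K₁ hK₁pos hWsd (fun t _ => hWs0 t) continuousOn_const
    (fun _ _ => le_rfl) (integrableOn_zero) hWsineq'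
  have hWsB : ∀ t ∈ Ici (0:ℝ), Ws t ≤ Ws 0 := by
    intro t ht
    have := hWsbd t ht
    simpa using this
  -- prescribed-time bound via the integral of μ
  obtain ⟨Φ, hΦ0, hΦT, hΦd, hΦtop⟩ := aux_Phi T ε hT hε μ hμ1 hμ2
  have hGanti : AntitoneOn (fun t => Ws t * Real.exp (K₁ * Φ t)) (Ici 0) := by
    apply aux_antitoneOn _ (fun t => (∑ i ∈ Finset.Icc 1 n, 2 * s i t * ds i t)
        * Real.exp (K₁ * Φ t) + Ws t * (Real.exp (K₁ * Φ t) * (K₁ * μ t)))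
    · intro t ht
      have hE : HasDerivWithinAt (fun τ => Real.exp (K₁ * Φ τ))
          (Real.exp (K₁ * Φ t) * (K₁ * μ t)) (Ici 0) t := ((hΦd t ht).const_mul K₁).exp
      exact (hWsd t ht).mul hE
    · intro t ht
      have h1 := hWsineq t ht
      have hE := Real.exp_pos (K₁ * Φ t)
      nlinarith [mul_le_mul_of_nonneg_right h1 hE.le]
  have hGT : Ws T * Real.exp (K₁ * Φ T) ≤ Ws 0 := by
    have := hGanti (self_mem_Ici) (mem_Ici.mpr hT.le) hT.le
    simpa [hΦ0] using this
  have hρ : (ε / (T + ε)) ^ (K₁ * (T + ε)) = Real.exp (-(K₁ * Φ T)) := by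
    rw [Real.rpow_def_of_pos (div_pos hε hTε), hΦT]
    congr 1
    have hlog : Real.log (ε / (T + ε)) = - Real.log ((T + ε) / ε) := by
      rw [show ε / (T + ε) = ((T + ε) / ε)⁻¹ by rw [inv_div], Real.log_inv]
    rw [hlog]; ring
  have hiT : (1 / 2 : ℝ) * Ws T ≤ ((1 / 2 : ℝ) * Ws 0) * (ε / (T + ε)) ^ (K₁ * (T + ε)) := by
    rw [hρ, Real.exp_neg]
    have hE := Real.exp_pos (K₁ * Φ T)
    have h2 : Ws T ≤ Ws 0 * (Real.exp (K₁ * Φ T))⁻¹ := by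
      rw [← div_eq_mul_inv, le_div_iff₀ hE]
      exact hGT
    linarith
  -- key inequality for Wz
  set hq : ℝ → ℝ := fun t => ∑ i ∈ Finset.Icc 1 (n - 1), 2 * l i * σ i t with hhq
  have hsub1n : Finset.Icc 1 (n - 1) ⊆ Finset.Icc 1 n :=
    Finset.Icc_subset_Icc_right (by omega)
  have hWzineq : ∀ t ∈ Ici (0:ℝ),
      (∑ i ∈ Finset.Icc 1 n, 2 * ζ i t * dζ i t) ≤ -K₁ * Wz t + hq t := by
    intro t ht
    have ht' : (0:ℝ) ≤ t := ht
    have hsplit : (∑ i ∈ Finset.Icc 1 n, 2 * ζ i t * dζ i t)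
        = ((∑ i ∈ Finset.Icc 1 n, -2 * k i * μ t * (ζ i t) ^ 2)
            - ∑ i ∈ Finset.Icc 1 n, 2 * l i * (ζ i t) ^ 2 / Real.sqrt ((ζ i t) ^ 2 + (σ i t) ^ 2))
          + ((∑ i ∈ Finset.Icc 1 n, (if i < n then 2 * g i t * ζ i t * (αhat i t - α i t)
              + 2 * g i t * ζ i t * ζ (i + 1) t else 0))
          - (∑ i ∈ Finset.Icc 1 n, (if 2 ≤ i then 2 * g (i - 1) t * ζ i t * ζ (i - 1) t else 0))) := by
      rw [← Finset.sum_sub_distrib, ← Finset.sum_sub_distrib, ← Finset.sum_add_distrib]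
      apply Finset.sum_congr rfl
      intro i hi
      simp only [hdζ]
      split_ifs <;> ring
    have hcrossA : (∑ i ∈ Finset.Icc 1 n, (if i < n then 2 * g i t * ζ i t * (αhat i t - α i t)
          + 2 * g i t * ζ i t * ζ (i + 1) t else 0))
        = ∑ i ∈ Finset.Icc 1 (n - 1), (2 * g i t * ζ i t * (αhat i t - α i t)
          + 2 * g i t * ζ i t * ζ (i + 1) t) := aux_trunc_lt n _ hn
    have hcrossB : (∑ i ∈ Finset.Icc 1 n, (if 2 ≤ i then 2 * g (i - 1) t * ζ i t * ζ (i - 1) t else 0))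
        = ∑ i ∈ Finset.Icc 1 (n - 1), 2 * g i t * ζ (i + 1) t * ζ i t := by
      rw [aux_trunc_ge n _ hn]
      apply Finset.sum_congr rfl
      intro i hi
      rw [Nat.add_sub_cancel]
    have hAB : (∑ i ∈ Finset.Icc 1 (n - 1), (2 * g i t * ζ i t * (αhat i t - α i t)
          + 2 * g i t * ζ i t * ζ (i + 1) t))
        - (∑ i ∈ Finset.Icc 1 (n - 1), 2 * g i t * ζ (i + 1) t * ζ i t)
        = ∑ i ∈ Finset.Icc 1 (n - 1), 2 * g i t * ζ i t * (αhat i t - α i t) := by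
      rw [← Finset.sum_sub_distrib]
      apply Finset.sum_congr rfl
      intros
      ring
    rw [hsplit, hcrossA, hcrossB, hAB]
    -- bound each piece
    have hsum1 : (∑ i ∈ Finset.Icc 1 n, -2 * k i * μ t * (ζ i t) ^ 2) ≤ -K₁ * Wz t := by
      have hterm : ∀ i ∈ Finset.Icc 1 n, -2 * k i * μ t * (ζ i t) ^ 2 ≤ -K₁ * (ζ i t) ^ 2 := by
        intro i hi
        have h1 := hkmin i hi
        have h3 : 1 ≤ μ t := hμge1 t ht
        have hkp := hk i hi
        have h4 : 0 ≤ (2 * k i * μ t - K₁) * (ζ i t) ^ 2 := by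
          apply mul_nonneg _ (sq_nonneg _)
          nlinarith
        nlinarith
      have h := Finset.sum_le_sum hterm
      rw [← Finset.mul_sum] at h
      simpa only [hWz] using h
    have hdrop : (∑ i ∈ Finset.Icc 1 (n - 1), 2 * l i * (ζ i t) ^ 2 / Real.sqrt ((ζ i t) ^ 2 + (σ i t) ^ 2))
        ≤ ∑ i ∈ Finset.Icc 1 n, 2 * l i * (ζ i t) ^ 2 / Real.sqrt ((ζ i t) ^ 2 + (σ i t) ^ 2) := by
      apply Finset.sum_le_sum_of_subset_of_nonneg hsub1n
      intro i hi _
      exact div_nonneg (mul_nonneg (mul_nonneg (by norm_num) (hl0' i hi)) (sq_nonneg _))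
        (Real.sqrt_nonneg _)
    have hdsum : (∑ i ∈ Finset.Icc 1 (n - 1), 2 * g i t * ζ i t * (αhat i t - α i t))
        ≤ ∑ i ∈ Finset.Icc 1 (n - 1), 2 * l i * |ζ i t| := by
      apply Finset.sum_le_sum
      intro i hi
      have hi' : i ∈ Finset.Icc 1 n := hsub1n hi
      have hgpos' := hgpos i hi' t ht'
      have hd : ζ i t * (αhat i t - α i t) ≤ |ζ i t| * τ i := by
        calc ζ i t * (αhat i t - α i t) ≤ |ζ i t * (αhat i t - α i t)| := le_abs_self _
          _ = |ζ i t| * |αhat i t - α i t| := abs_mul _ _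
          _ ≤ |ζ i t| * τ i := mul_le_mul_of_nonneg_left (hfilt_err i hi t ht') (abs_nonneg _)
      have c1 : g i t * (ζ i t * (αhat i t - α i t)) ≤ g i t * (|ζ i t| * τ i) :=
        mul_le_mul_of_nonneg_left hd hgpos'.le
      have c3 : g i t * τ i ≤ sSup ((g i) '' Set.Ici (0:ℝ)) * τ i :=
        mul_le_mul_of_nonneg_right (hgS i hi' t ht') (hτ0 i hi)
      have c4 : (g i t * τ i) * |ζ i t| ≤ l i * |ζ i t| :=
        mul_le_mul_of_nonneg_right (c3.trans (hl i hi)) (abs_nonneg _)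
      nlinarith [c1, c4]
    have hsoft : (∑ i ∈ Finset.Icc 1 (n - 1), (2 * l i * |ζ i t|
          - 2 * l i * (ζ i t) ^ 2 / Real.sqrt ((ζ i t) ^ 2 + (σ i t) ^ 2))) ≤ hq t := by
      apply Finset.sum_le_sum
      intro i hi
      have hi' : i ∈ Finset.Icc 1 n := hsub1n hi
      have := aux_soft (ζ i t) (σ i t) (l i) (hσpos i hi' t ht') (hl0 i hi)
      have e1 : l i * (ζ i t) ^ 2 / Real.sqrt ((ζ i t) ^ 2 + (σ i t) ^ 2) * 2
          = 2 * l i * (ζ i t) ^ 2 / Real.sqrt ((ζ i t) ^ 2 + (σ i t) ^ 2) := by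
        ring
      nlinarith [this]
    have hsoft' : (∑ i ∈ Finset.Icc 1 (n - 1), 2 * l i * |ζ i t|)
        - (∑ i ∈ Finset.Icc 1 (n - 1), 2 * l i * (ζ i t) ^ 2 / Real.sqrt ((ζ i t) ^ 2 + (σ i t) ^ 2))
        = ∑ i ∈ Finset.Icc 1 (n - 1), (2 * l i * |ζ i t|
          - 2 * l i * (ζ i t) ^ 2 / Real.sqrt ((ζ i t) ^ 2 + (σ i t) ^ 2)) := by
      rw [← Finset.sum_sub_distrib]
    linarith [hsum1, hdrop, hdsum, hsoft, hsoft'.le, hsoft'.ge]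
  have hqcont : ContinuousOn hq (Ici (0:ℝ)) := by
    apply continuousOn_finset_sum
    intro i hi
    exact (hσcont i (hsub1n hi)).const_smul (2 * l i) |>.congr (fun t _ => by simp [smul_eq_mul])
  have hqpos : ∀ t ∈ Ici (0:ℝ), 0 ≤ hq t := by
    intro t ht
    apply Finset.sum_nonneg
    intro i hi
    have := hl0 i hi
    have := (hσpos i (hsub1n hi) t ht).le
    positivity
  have hqint : IntegrableOn hq (Ici (0:ℝ)) := by
    apply MeasureTheory.integrable_finset_sum
    intro i hi
    exact ((hσint i (hsub1n hi)).1).const_mul (2 * l i)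
  obtain ⟨hWzbd, hWztend⟩ := aux_decay Wz (fun t => ∑ i ∈ Finset.Icc 1 n, 2 * ζ i t * dζ i t)
    hq K₁ hK₁pos hWzd (fun t _ => hWz0 t) hqcont hqpos hqint hWzineq
  -- pointwise convergence from convergence of the sums of squares
  have htend : ∀ (w : ℕ → ℝ → ℝ),
      Tendsto (fun t => ∑ i ∈ Finset.Icc 1 n, (w i t) ^ 2) atTop (nhds 0) →
      ∀ i ∈ Finset.Icc 1 n, Tendsto (w i) atTop (nhds 0) := by
    intro w hW i hi
    apply squeeze_zero_norm'
      (a := fun t => Real.sqrt (∑ i ∈ Finset.Icc 1 n, (w i t) ^ 2))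
    · filter_upwards [eventually_ge_atTop (0:ℝ)] with t ht
      rw [Real.norm_eq_abs, ← Real.sqrt_sq_eq_abs]
      exact Real.sqrt_le_sqrt (Finset.single_le_sum (fun j _ => sq_nonneg (w j t)) hi)
    · have := (Real.continuous_sqrt.tendsto 0).comp hW
      simpa [Function.comp_def] using this
  have hstend := htend s hWstend
  have hζtend := htend ζ hWztend
  -- Wz 0 = 0
  have hWz00 : Wz 0 = 0 := Finset.sum_eq_zero fun i hi => by rw [hζ0 i hi]; ring
  -- pointwise bounds
  have h1mem : (1:ℕ) ∈ Finset.Icc 1 n := by rw [Finset.mem_Icc]; omega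
  set Lz : ℝ := ∫ x in Ioi (0:ℝ), hq x with hLz
  have hz1eq : ∀ t : ℝ, x 1 t - xd t = s 1 t + ζ 1 t := by
    intro t
    have h1 := hs 1 h1mem t
    have h2 := hz1 t
    linear_combination -h1 - h2
  have hbd1 : ∀ t ∈ Ici (0:ℝ), |s 1 t| ≤ Real.sqrt (Ws 0) := by
    intro t ht
    rw [← Real.sqrt_sq_eq_abs]
    apply Real.sqrt_le_sqrt
    calc (s 1 t) ^ 2 ≤ Ws t := Finset.single_le_sum (fun j _ => sq_nonneg (s j t)) h1mem
      _ ≤ Ws 0 := hWsB t ht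
  have hbd2 : ∀ t ∈ Ici (0:ℝ), |ζ 1 t| ≤ Real.sqrt (2 * Lz) := by
    intro t ht
    rw [← Real.sqrt_sq_eq_abs]
    apply Real.sqrt_le_sqrt
    calc (ζ 1 t) ^ 2 ≤ Wz t := Finset.single_le_sum (fun j _ => sq_nonneg (ζ j t)) h1mem
      _ ≤ Wz 0 + 2 * Lz := hWzbd t ht
      _ = 2 * Lz := by rw [hWz00]; ring
  refine ⟨⟨⟨(1 / 2 : ℝ) * Ws 0, ?_⟩, ?_⟩, ?_, ⟨⟨Real.sqrt (Ws 0) + Real.sqrt (2 * Lz), ?_⟩, ?_⟩⟩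
  · intro t ht
    have := hWsB t (mem_Ici.mpr ht)
    simp only [hWs]
    linarith
  · exact hiT
  · intro i hi
    exact ⟨hstend i hi, hζtend i hi⟩
  · intro t ht
    rw [hz1eq t]
    calc |s 1 t + ζ 1 t| ≤ |s 1 t| + |ζ 1 t| := abs_add_le _ _
      _ ≤ Real.sqrt (Ws 0) + Real.sqrt (2 * Lz) :=
          add_le_add (hbd1 t (mem_Ici.mpr ht)) (hbd2 t (mem_Ici.mpr ht))
  · have heq : (fun t => x 1 t - xd t) = fun t => s 1 t + ζ 1 t := funext hz1eq
    rw [heq]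
    have := (hstend 1 h1mem).add (hζtend 1 h1mem)
    simpa using this
end
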